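/- arXiv:2005.01825 — 5 statements merged into one kernel-verified Lean document; each statement's English description precedes it below -/
import Mathlib

section
/- Let 0 < L < ∞ and let {(y_i, u_i)}_{i∈I} ⊂ ℝ^d × ℝ^d be a finite indexed set. Then {(y_i, u_i)}_{i∈I} is S_{0,L} interpolable (there exists a convex differentiable f : ℝ^d → ℝ with L-Lipschitz gradient and ∇f(y_i) = u_i for all i ∈ I) if and only if the swapped set {(u_i, y_i)}_{i∈I} is S_{1/L, ∞} interpolable (there exists a (1/L)-strongly convex function g : ℝ^d → ℝ such that y_i is a subgradient of g at u_i for all i ∈ I). -/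
open RealInnerProductSpace

/-- `u` is a subgradient of `f` at `y`. -/
def IsSubgradientAt {d : ℕ} (f : EuclideanSpace ℝ (Fin d) → ℝ)
    (u y : EuclideanSpace ℝ (Fin d)) : Prop :=
  ∀ z, f y + ⟪u, z - y⟫ ≤ f z

/-- `f` is `m`-strongly convex: `y ↦ f y - m/2 ‖y‖²` is convex. -/
def StronglyConvexFun {d : ℕ} (m : ℝ) (f : EuclideanSpace ℝ (Fin d) → ℝ) : Prop :=
  ConvexOn ℝ Set.univ (fun y => f y - m / 2 * ‖y‖ ^ 2)

section Aux

open Set Filter Topology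

variable {d : ℕ}

local notation "E" => EuclideanSpace ℝ (Fin d)

/-- Affine functions are convex. -/
lemma convexOn_inner_const (v : E) (c : ℝ) :
    ConvexOn ℝ Set.univ (fun x : E => c + ⟪v, x⟫) := by
  refine ⟨convex_univ, fun x _ z _ a b ha hb hab => ?_⟩
  apply le_of_eq
  simp only [inner_add_right, real_inner_smul_right, smul_eq_mul]
  linear_combination (-c) * hab

/-- Enhanced subgradient inequality for strongly convex functions. -/
lemma strong_subgrad {μ : ℝ} (hμ : 0 ≤ μ) {g : E → ℝ}
    (hg : StronglyConvexFun μ g) {uu yy : E} (h : IsSubgradientAt g yy uu) (z : E) :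
    g uu + ⟪yy, z - uu⟫ + μ / 2 * ‖z - uu‖ ^ 2 ≤ g z := by
  have hs : StrongConvexOn Set.univ μ g := strongConvexOn_iff_convex.mpr hg
  have key : ∀ t ∈ Set.Ioc (0:ℝ) 1,
      g uu + ⟪yy, z - uu⟫ + μ / 2 * (1 - t) * ‖z - uu‖ ^ 2 ≤ g z := by
    intro t ht
    obtain ⟨ht0, ht1⟩ := ht
    have hcomb := hs.2 (Set.mem_univ uu) (Set.mem_univ z)
      (show (0:ℝ) ≤ 1 - t by linarith) ht0.le (by ring)
    have hsubg := h ((1 - t) • uu + t • z)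
    have hpt : ((1 - t) • uu + t • z) - uu = t • (z - uu) := by
      module
    rw [hpt, real_inner_smul_right] at hsubg
    have hnorm : ‖uu - z‖ = ‖z - uu‖ := norm_sub_rev _ _
    rw [hnorm] at hcomb
    simp only [smul_eq_mul] at hcomb
    nlinarith [hcomb, hsubg]
  have tlim : Tendsto (fun t : ℝ => g uu + ⟪yy, z - uu⟫ + μ / 2 * (1 - t) * ‖z - uu‖ ^ 2)
      (𝓝[>] (0:ℝ)) (𝓝 (g uu + ⟪yy, z - uu⟫ + μ / 2 * (1 - 0) * ‖z - uu‖ ^ 2)) := by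
    apply Tendsto.mono_left _ nhdsWithin_le_nhds
    exact (Continuous.tendsto (by continuity) 0)
  have : g uu + ⟪yy, z - uu⟫ + μ / 2 * (1 - 0) * ‖z - uu‖ ^ 2 ≤ g z := by
    refine le_of_tendsto tlim ?_
    filter_upwards [Ioc_mem_nhdsGT_of_mem (Set.mem_Ico.mpr ⟨le_refl _, one_pos⟩)] with t ht
    exact key t ht
  simpa using this

/-- The gradient inequality for differentiable convex functions. -/
lemma convex_grad_ineq {f : E → ℝ} (hf : ConvexOn ℝ Set.univ f) (hd : Differentiable ℝ f)
    (x z : E) : f x + ⟪gradient f x, z - x⟫ ≤ f z := by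
  have hc : HasDerivAt (fun t : ℝ => x + t • (z - x)) (z - x) 0 := by
    simpa using ((hasDerivAt_id (0:ℝ)).smul_const (z - x)).const_add x
  have h0 : x + (0:ℝ) • (z - x) = x := by simp
  have hF : HasFDerivAt f (InnerProductSpace.toDual ℝ _ (gradient f x)) x :=
    hasGradientAt_iff_hasFDerivAt.mp (hd x).hasGradientAt
  have hF' : HasFDerivAt f (InnerProductSpace.toDual ℝ _ (gradient f x))
      (x + (0:ℝ) • (z - x)) := by rw [h0]; exact hF
  have hder : HasDerivAt (fun t : ℝ => f (x + t • (z - x))) ⟪gradient f x, z - x⟫ 0 := by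
    exact hF'.comp_hasDerivAt 0 hc
  have hslope := hasDerivAt_iff_tendsto_slope.mp hder
  have hslope' : Tendsto (slope (fun t : ℝ => f (x + t • (z - x))) 0) (𝓝[>] 0)
      (𝓝 ⟪gradient f x, z - x⟫) :=
    hslope.mono_left (nhdsWithin_mono 0 (fun t ht => ne_of_gt ht))
  have hbound : ⟪gradient f x, z - x⟫ ≤ f z - f x := by
    refine le_of_tendsto hslope' ?_
    filter_upwards [Ioc_mem_nhdsGT_of_mem (Set.mem_Ico.mpr ⟨le_refl (0:ℝ), one_pos⟩)] with t ht
    obtain ⟨ht0, ht1⟩ := ht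
    have hcomb := hf.2 (Set.mem_univ x) (Set.mem_univ z)
      (show (0:ℝ) ≤ 1 - t by linarith) ht0.le (by ring)
    have hxt : x + t • (z - x) = (1 - t) • x + t • z := by module
    rw [slope_def_field, hxt, h0, sub_zero, div_le_iff₀ ht0]
    simp only [smul_eq_mul] at hcomb
    nlinarith [hcomb]
  linarith

/-- The descent lemma for functions with Lipschitz gradient. -/
lemma descent_lemma {L : ℝ} (hL : 0 ≤ L) {f : E → ℝ} (hd : Differentiable ℝ f)
    (hlip : ∀ a b : E, ‖gradient f b - gradient f a‖ ≤ L * ‖b - a‖) (x z : E) :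
    f z ≤ f x + ⟪gradient f x, z - x⟫ + L / 2 * ‖z - x‖ ^ 2 := by
  set v := z - x with hv
  have hc : ∀ t : ℝ, HasDerivAt (fun t : ℝ => x + t • v) v t := fun t => by
    simpa using ((hasDerivAt_id t).smul_const v).const_add x
  have hder : ∀ t : ℝ, HasDerivAt (fun t : ℝ => f (x + t • v))
      ⟪gradient f (x + t • v), v⟫ t := by
    intro t
    have hF : HasFDerivAt f (InnerProductSpace.toDual ℝ _ (gradient f (x + t • v)))
        (x + t • v) := hasGradientAt_iff_hasFDerivAt.mp (hd _).hasGradientAt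
    exact hF.comp_hasDerivAt t (hc t)
  set ψ : ℝ → ℝ := fun t => f (x + t • v) - t * ⟪gradient f x, v⟫ - L / 2 * ‖v‖ ^ 2 * t ^ 2
    with hψdef
  have hψ : ∀ t : ℝ, HasDerivAt ψ
      (⟪gradient f (x + t • v) - gradient f x, v⟫ - L * ‖v‖ ^ 2 * t) t := by
    intro t
    have h1 := ((hder t).sub (hasDerivAt_mul_const ⟪gradient f x, v⟫)).sub
      ((hasDerivAt_pow 2 t).const_mul (L / 2 * ‖v‖ ^ 2))
    refine h1.congr_deriv ?_
    rw [inner_sub_left]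
    push_cast
    ring
  have hmono : AntitoneOn ψ (Set.Icc 0 1) := by
    apply antitoneOn_of_deriv_nonpos (convex_Icc 0 1)
    · exact (Differentiable.continuous fun t => (hψ t).differentiableAt).continuousOn
    · intro t _
      exact (hψ t).differentiableAt.differentiableWithinAt
    · intro t ht
      rw [interior_Icc] at ht
      rw [(hψ t).deriv]
      have h1 : ⟪gradient f (x + t • v) - gradient f x, v⟫
          ≤ ‖gradient f (x + t • v) - gradient f x‖ * ‖v‖ := real_inner_le_norm _ _
      have h2 : ‖gradient f (x + t • v) - gradient f x‖ ≤ L * ‖t • v‖ := by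
        simpa using hlip x (x + t • v)
      rw [norm_smul, Real.norm_eq_abs, abs_of_pos ht.1] at h2
      nlinarith [norm_nonneg v, mul_le_mul_of_nonneg_right h2 (norm_nonneg v)]
  have hfin := hmono (Set.left_mem_Icc.mpr zero_le_one) (Set.right_mem_Icc.mpr zero_le_one)
    zero_le_one
  have h1 : x + (1:ℝ) • v = z := by rw [one_smul, hv]; abel
  have h0 : x + (0:ℝ) • v = x := by simp
  simp only [hψdef, h1, h0, one_mul, mul_one, one_pow, zero_mul, mul_zero, sub_zero] at hfin
  linarith


lemma forward_dir {ι : Type*} [Fintype ι] [Nonempty ι] (L : ℝ) (hL : 0 < L)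
    (y u : ι → E) (f : E → ℝ) (hconv : ConvexOn ℝ Set.univ f) (hdiff : Differentiable ℝ f)
    (hlip : ∀ y₁ y₂ : E, ‖gradient f y₂ - gradient f y₁‖ ≤ L * ‖y₂ - y₁‖)
    (hgrad : ∀ i, gradient f (y i) = u i) :
    ∃ g : E → ℝ, StronglyConvexFun (1 / L) g ∧ ∀ i, IsSubgradientAt g (y i) (u i) := by
  have hL0 : L ≠ 0 := hL.ne'
  have coco : ∀ i j, f (y j) + ⟪u j, y i - y j⟫ + 1 / L / 2 * ‖u i - u j‖ ^ 2 ≤ f (y i) := by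
    intro i j
    set z0 : E := y i - (1 / L) • (u i - u j) with hz0
    have hA := convex_grad_ineq hconv hdiff (y j) z0
    have hB := descent_lemma hL.le hdiff hlip (y i) z0
    rw [hgrad i] at hB
    rw [hgrad j] at hA
    have e1 : z0 - y i = -((1 / L) • (u i - u j)) := by rw [hz0]; abel
    have e2 : z0 - y j = (y i - y j) - (1 / L) • (u i - u j) := by rw [hz0]; abel
    rw [e1, inner_neg_right, real_inner_smul_right, norm_neg, norm_smul, Real.norm_eq_abs,
      abs_of_pos (by positivity : (0:ℝ) < 1 / L)] at hB
    rw [e2, inner_sub_right, real_inner_smul_right] at hA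
    have hq : L / 2 * (1 / L * ‖u i - u j‖) ^ 2 = 1 / L / 2 * ‖u i - u j‖ ^ 2 := by
      field_simp
    rw [hq] at hB
    have hbase : ⟪u i, u i - u j⟫ - ⟪u j, u i - u j⟫ = ‖u i - u j‖ ^ 2 := by
      rw [← inner_sub_left, real_inner_self_eq_norm_sq]
    have hiuj : (1 / L) * ⟪u i, u i - u j⟫ - (1 / L) * ⟪u j, u i - u j⟫
        = (1 / L) * ‖u i - u j‖ ^ 2 := by linear_combination (1 / L) * hbase
    linarith [hA, hB, hiuj]
  set c : ι → ℝ := fun i => ⟪u i, y i⟫ - f (y i) with hcdef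
  set piece : ι → E → ℝ := fun i x => c i + ⟪y i, x - u i⟫ + 1 / L / 2 * ‖x - u i‖ ^ 2
    with hpiece
  set g : E → ℝ := fun x => Finset.univ.sup' Finset.univ_nonempty (fun i => piece i x) with hg
  have hkey : ∀ i j, piece i (u j) ≤ c j := by
    intro i j
    have h3 := coco i j
    rw [inner_sub_right] at h3
    simp only [hpiece, hcdef, inner_sub_right]
    have h1 := real_inner_comm (y i) (u j)
    have h2 := real_inner_comm (y i) (u i)
    have hnq : 1 / L / 2 * ‖u j - u i‖ ^ 2 = 1 / L / 2 * ‖u i - u j‖ ^ 2 := by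
      rw [norm_sub_rev]
    linarith
  have geval : ∀ j, g (u j) = c j := by
    intro j
    apply le_antisymm
    · exact Finset.sup'_le _ _ fun i _ => hkey i j
    · have hpj : piece j (u j) = c j := by simp [hpiece]
      calc c j = piece j (u j) := hpj.symm
        _ ≤ g (u j) := Finset.le_sup' (fun i => piece i (u j)) (Finset.mem_univ j)
  refine ⟨g, ?_, ?_⟩
  · unfold StronglyConvexFun
    have hAe : ∀ i : ι, (fun x : E => piece i x - 1 / L / 2 * ‖x‖ ^ 2)
        = fun x : E => (c i - ⟪y i, u i⟫ + 1 / L / 2 * ‖u i‖ ^ 2) + ⟪y i - (1 / L) • u i, x⟫ := by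
      intro i
      funext x
      simp only [hpiece, inner_sub_right, inner_sub_left, real_inner_smul_left]
      rw [norm_sub_sq_real, real_inner_comm x (u i)]
      ring
    have hAc : ∀ i : ι, ConvexOn ℝ Set.univ (fun x : E => piece i x - 1 / L / 2 * ‖x‖ ^ 2) := by
      intro i
      rw [hAe i]
      exact convexOn_inner_const _ _
    have heq : (fun x : E => g x - 1 / L / 2 * ‖x‖ ^ 2)
        = Finset.univ.sup' Finset.univ_nonempty
          (fun i : ι => (fun x : E => piece i x - 1 / L / 2 * ‖x‖ ^ 2)) := by
      funext x
      rw [Finset.sup'_apply, hg]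
      exact Finset.comp_sup'_eq_sup'_comp _ (fun t : ℝ => t - 1 / L / 2 * ‖x‖ ^ 2)
        (fun a b => (max_sub_sub_right a b _).symm)
    rw [heq]
    exact Finset.sup'_induction _ _ (fun p hp q hq => hp.sup hq) (fun i _ => hAc i)
  · intro j z
    rw [geval j]
    have h1 : piece j z ≤ g z := Finset.le_sup' (fun i => piece i z) (Finset.mem_univ j)
    have h2 : c j + ⟪y j, z - u j⟫ ≤ piece j z := by
      have h0 : (0:ℝ) ≤ 1 / L / 2 * ‖z - u j‖ ^ 2 := by positivity
      simp only [hpiece]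
      linarith
    linarith

lemma backward_dir {ι : Type*} [Fintype ι] [Nonempty ι] (L : ℝ) (hL : 0 < L)
    (y u : ι → E) (g : E → ℝ) (hg : StronglyConvexFun (1 / L) g)
    (hsub : ∀ i, IsSubgradientAt g (y i) (u i)) :
    ∃ f : E → ℝ, ConvexOn ℝ Set.univ f ∧ Differentiable ℝ f ∧
      (∀ y₁ y₂ : E, ‖gradient f y₂ - gradient f y₁‖ ≤ L * ‖y₂ - y₁‖) ∧
      ∀ i, gradient f (y i) = u i := by
  have hL0 : L ≠ 0 := hL.ne'
  set μ : ℝ := 1 / L with hμdef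
  have hμ : 0 < μ := by positivity
  have hcont : Continuous g := by
    have h1 : Continuous fun s : E => g s - μ / 2 * ‖s‖ ^ 2 := by
      rw [← continuousOn_univ]
      exact hg.continuousOn isOpen_univ
    have h2 : Continuous fun s : E => (g s - μ / 2 * ‖s‖ ^ 2) + μ / 2 * ‖s‖ ^ 2 :=
      h1.add (by continuity)
    simpa using h2
  have i0 : ι := Classical.arbitrary ι
  have hlb := strong_subgrad hμ.le hg (hsub i0)
  have hquad : ∀ a b : E, ‖a‖ ^ 2 / 2 - ‖b‖ ^ 2 ≤ ‖a - b‖ ^ 2 := by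
    intro a b
    have h1 : ‖a‖ ≤ ‖a - b‖ + ‖b‖ := by
      calc ‖a‖ = ‖a - b + b‖ := by rw [sub_add_cancel]
        _ ≤ ‖a - b‖ + ‖b‖ := norm_add_le _ _
    nlinarith [sq_nonneg (‖a - b‖ - ‖b‖), norm_nonneg a, norm_nonneg (a - b), norm_nonneg b]
  have hmin : ∀ x : E, ∃ s : E, ∀ s' : E, g s - ⟪x, s⟫ ≤ g s' - ⟪x, s'⟫ := by
    intro x
    have hbound : ∀ s : E,
        (g (u i0) - ⟪y i0, u i0⟫ - μ / 2 * ‖u i0‖ ^ 2) - ‖y i0 - x‖ * ‖s‖ + μ / 4 * ‖s‖ ^ 2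
          ≤ g s - ⟪x, s⟫ := by
      intro s
      have h1 := hlb s
      have hinner : -(‖y i0 - x‖ * ‖s‖) ≤ ⟪y i0 - x, s⟫ := by
        have ha := abs_real_inner_le_norm (y i0 - x) s
        have hb := neg_abs_le ⟪y i0 - x, s⟫
        linarith
      rw [inner_sub_left] at hinner
      rw [inner_sub_right] at h1
      have h3 : μ / 2 * (‖s‖ ^ 2 / 2 - ‖u i0‖ ^ 2) ≤ μ / 2 * ‖s - u i0‖ ^ 2 :=
        mul_le_mul_of_nonneg_left (hquad s (u i0)) (by positivity)
      nlinarith [h1, hinner, h3]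
    have hcoer : Filter.Tendsto (fun s : E => g s - ⟪x, s⟫) (Filter.cocompact E) Filter.atTop := by
      have hq1 : Filter.Tendsto (fun r : ℝ => μ / 4 * r - ‖y i0 - x‖) Filter.atTop
          Filter.atTop :=
        Filter.tendsto_atTop_add_const_right _ _ (Filter.Tendsto.const_mul_atTop
          (by positivity) Filter.tendsto_id)
      have hq2 : Filter.Tendsto (fun r : ℝ => r * (μ / 4 * r - ‖y i0 - x‖)) Filter.atTop
          Filter.atTop := Filter.Tendsto.atTop_mul_atTop₀ Filter.tendsto_id hq1
      have hq3 : Filter.Tendsto (fun r : ℝ =>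
          (g (u i0) - ⟪y i0, u i0⟫ - μ / 2 * ‖u i0‖ ^ 2) - ‖y i0 - x‖ * r + μ / 4 * r ^ 2)
          Filter.atTop Filter.atTop := by
        apply (Filter.tendsto_atTop_add_const_right _
          (g (u i0) - ⟪y i0, u i0⟫ - μ / 2 * ‖u i0‖ ^ 2) hq2).congr
        intro r
        ring
      exact Filter.tendsto_atTop_mono hbound (hq3.comp tendsto_norm_cocompact_atTop)
    exact Continuous.exists_forall_le (hcont.sub (Continuous.inner continuous_const
      continuous_id)) hcoer
  choose P hP using hmin
  have key : ∀ x s : E, g (P x) - ⟪x, P x⟫ + μ / 2 * ‖s - P x‖ ^ 2 ≤ g s - ⟪x, s⟫ := by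
    intro x s
    have hgx : StronglyConvexFun μ (fun s : E => g s - ⟪x, s⟫) := by
      unfold StronglyConvexFun
      have heq : (fun s : E => (g s - ⟪x, s⟫) - μ / 2 * ‖s‖ ^ 2)
          = fun s : E => (g s - μ / 2 * ‖s‖ ^ 2) + (0 + ⟪-x, s⟫) := by
        funext s
        rw [inner_neg_left]
        ring
      rw [heq]
      exact hg.add (convexOn_inner_const (-x) 0)
    have hzero : IsSubgradientAt (fun s : E => g s - ⟪x, s⟫) 0 (P x) := by
      intro z
      rw [inner_zero_left]
      simpa using hP x z
    have := strong_subgrad hμ.le hgx hzero s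
    rw [inner_zero_left] at this
    linarith
  have hPlip : ∀ x₁ x₂ : E, ‖P x₂ - P x₁‖ ≤ L * ‖x₂ - x₁‖ := by
    intro x₁ x₂
    have h1 := key x₁ (P x₂)
    have h2 := key x₂ (P x₁)
    rw [show ‖P x₁ - P x₂‖ = ‖P x₂ - P x₁‖ from norm_sub_rev _ _] at h2
    have hin : μ * ‖P x₂ - P x₁‖ ^ 2 ≤ ⟪x₂ - x₁, P x₂ - P x₁⟫ := by
      have e1 : ⟪x₂ - x₁, P x₂ - P x₁⟫
          = (⟪x₂, P x₂⟫ - ⟪x₂, P x₁⟫) - (⟪x₁, P x₂⟫ - ⟪x₁, P x₁⟫) := by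
        linarith [inner_sub_left (𝕜 := ℝ) x₂ x₁ (P x₂ - P x₁),
          inner_sub_right (𝕜 := ℝ) x₂ (P x₂) (P x₁), inner_sub_right (𝕜 := ℝ) x₁ (P x₂) (P x₁)]
      linarith [h1, h2, e1.le, e1.ge]
    have hcs : ⟪x₂ - x₁, P x₂ - P x₁⟫ ≤ ‖x₂ - x₁‖ * ‖P x₂ - P x₁‖ := real_inner_le_norm _ _
    rcases eq_or_lt_of_le (norm_nonneg (P x₂ - P x₁)) with h0 | h0
    · rw [← h0]
      positivity
    · have h3 : μ * ‖P x₂ - P x₁‖ ≤ ‖x₂ - x₁‖ := by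
        have h4 := le_trans hin hcs
        nlinarith [h0]
      calc ‖P x₂ - P x₁‖ = L * (μ * ‖P x₂ - P x₁‖) := by
            rw [hμdef]
            field_simp
        _ ≤ L * ‖x₂ - x₁‖ := mul_le_mul_of_nonneg_left h3 hL.le
  set f : E → ℝ := fun x => ⟪x, P x⟫ - g (P x) with hf
  have fmax : ∀ x s : E, ⟪x, s⟫ - g s ≤ f x := by
    intro x s
    have := hP x s
    simp only [hf]
    linarith
  have flow : ∀ x z : E, f x + ⟪P x, z - x⟫ ≤ f z := by
    intro x z
    have h1 : f x + ⟪P x, z - x⟫ = ⟪z, P x⟫ - g (P x) := by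
      simp only [hf]
      linarith [real_inner_comm (P x) (z - x), inner_sub_left (𝕜 := ℝ) z x (P x)]
    rw [h1]
    exact fmax z (P x)
  have fup : ∀ x z : E, f z - f x - ⟪P x, z - x⟫ ≤ L * ‖z - x‖ ^ 2 := by
    intro x z
    have h1 : f z - f x ≤ ⟪z, P z⟫ - ⟪x, P z⟫ := by
      have h1a := fmax x (P z)
      have h1b : f z = ⟪z, P z⟫ - g (P z) := by simp only [hf]
      linarith
    have h2 : ⟪z, P z⟫ - ⟪x, P z⟫ = ⟪z - x, P x⟫ + ⟪z - x, P z - P x⟫ := by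
      linarith [inner_sub_left (𝕜 := ℝ) z x (P x), inner_sub_left (𝕜 := ℝ) z x (P z - P x),
        inner_sub_right (𝕜 := ℝ) (z - x) (P z) (P x), inner_sub_left (𝕜 := ℝ) z x (P z)]
    have h3 : ⟪z - x, P z - P x⟫ ≤ ‖z - x‖ * ‖P z - P x‖ := real_inner_le_norm _ _
    have h4 : ‖z - x‖ * ‖P z - P x‖ ≤ ‖z - x‖ * (L * ‖z - x‖) :=
      mul_le_mul_of_nonneg_left (hPlip x z) (norm_nonneg _)
    have h5 : ⟪P x, z - x⟫ = ⟪z - x, P x⟫ := real_inner_comm _ _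
    nlinarith [h1, h3, h4]
  have hgradAt : ∀ x : E, HasGradientAt f (P x) x := by
    intro x
    rw [hasGradientAt_iff_isLittleO, Asymptotics.isLittleO_iff]
    intro ε hε
    filter_upwards [Metric.ball_mem_nhds x (show (0:ℝ) < ε / L by positivity)] with z hz
    rw [Metric.mem_ball, dist_eq_norm] at hz
    have hlo := flow x z
    have hup := fup x z
    have habs : |f z - f x - ⟪P x, z - x⟫| ≤ L * ‖z - x‖ ^ 2 := by
      rw [abs_le]
      constructor
      · nlinarith [sq_nonneg ‖z - x‖, norm_nonneg (z - x)]
      · linarith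
    rw [Real.norm_eq_abs]
    have hstep : L * ‖z - x‖ ≤ ε := by
      have h6 : L * ‖z - x‖ ≤ L * (ε / L) := mul_le_mul_of_nonneg_left hz.le hL.le
      calc L * ‖z - x‖ ≤ L * (ε / L) := h6
        _ = ε := by field_simp
    calc |f z - f x - ⟪P x, z - x⟫| ≤ L * ‖z - x‖ ^ 2 := habs
      _ = (L * ‖z - x‖) * ‖z - x‖ := by ring
      _ ≤ ε * ‖z - x‖ := mul_le_mul_of_nonneg_right hstep (norm_nonneg _)
  have hdiff : Differentiable ℝ f := fun x => (hgradAt x).differentiableAt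
  have hgradeq : ∀ x, gradient f x = P x := fun x => (hgradAt x).gradient
  refine ⟨f, ?_, hdiff, ?_, ?_⟩
  · refine ⟨convex_univ, fun x₁ _ x₂ _ a b ha hb hab => ?_⟩
    set sb : E := P (a • x₁ + b • x₂) with hsb
    have h1 : f (a • x₁ + b • x₂) = a * (⟪x₁, sb⟫ - g sb) + b * (⟪x₂, sb⟫ - g sb) := by
      simp only [hf]
      rw [inner_add_left, real_inner_smul_left, real_inner_smul_left]
      linear_combination (g sb) * hab
    rw [h1]
    have h2 := mul_le_mul_of_nonneg_left (fmax x₁ sb) ha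
    have h3 := mul_le_mul_of_nonneg_left (fmax x₂ sb) hb
    simpa [smul_eq_mul] using add_le_add h2 h3
  · intro y₁ y₂
    rw [hgradeq, hgradeq]
    exact hPlip y₁ y₂
  · intro i
    rw [hgradeq]
    have hmin_u : ∀ s, g (u i) - ⟪y i, u i⟫ ≤ g s - ⟪y i, s⟫ := by
      intro s
      have := hsub i s
      rw [inner_sub_right] at this
      linarith
    have h1 := key (y i) (u i)
    have h2 := hmin_u (P (y i))
    have h6 : μ / 2 * ‖u i - P (y i)‖ ^ 2 ≤ 0 := by linarith
    have h3 : ‖u i - P (y i)‖ = 0 := by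
      by_contra hne
      have hpos : 0 < ‖u i - P (y i)‖ := lt_of_le_of_ne (norm_nonneg _) (Ne.symm hne)
      nlinarith [mul_pos hpos hpos, hμ]
    have h4 : u i - P (y i) = 0 := norm_eq_zero.mp h3
    have h5 : P (y i) = u i := by
      have := sub_eq_zero.mp h4
      exact this.symm
    rw [h5]

end Aux

theorem s0L_interpolable_iff_swapped_s1L_inf_interpolable
    {d : ℕ} {ι : Type*} [Fintype ι] (L : ℝ) (hL : 0 < L)
    (y u : ι → EuclideanSpace ℝ (Fin d)) :
    (∃ f : EuclideanSpace ℝ (Fin d) → ℝ, ConvexOn ℝ Set.univ f ∧ Differentiable ℝ f ∧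
        (∀ y₁ y₂, ‖gradient f y₂ - gradient f y₁‖ ≤ L * ‖y₂ - y₁‖) ∧
        ∀ i, gradient f (y i) = u i) ↔
      (∃ g : EuclideanSpace ℝ (Fin d) → ℝ, StronglyConvexFun (1 / L) g ∧
        ∀ i, IsSubgradientAt g (y i) (u i)) := by
  rcases isEmpty_or_nonempty ι with hemp | hne
  · apply iff_of_true
    · refine ⟨fun _ => 0, convexOn_const 0 convex_univ, differentiable_const 0, ?_, fun i => isEmptyElim i⟩
      intro y₁ y₂
      simp only [gradient_fun_const, sub_zero, norm_zero]
      positivity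
    · refine ⟨fun x => 1 / L / 2 * ‖x‖ ^ 2, ?_, fun i => isEmptyElim i⟩
      unfold StronglyConvexFun
      have heq : (fun x : EuclideanSpace ℝ (Fin d) => 1 / L / 2 * ‖x‖ ^ 2 - 1 / L / 2 * ‖x‖ ^ 2)
          = fun _ => (0:ℝ) := by
        funext x
        ring
      rw [heq]
      exact convexOn_const 0 convex_univ
  · constructor
    · rintro ⟨f, h1, h2, h3, h4⟩
      exact forward_dir L hL y u f h1 h2 h3 h4
    · rintro ⟨g, h1, h2⟩
      exact backward_dir L hL y u g h1 h2
end

section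
/- (Lossless S-procedure.) Let M_0, M_1, …, M_L be real symmetric ℓ×ℓ matrices and suppose d ≥ ℓ. Assume there exists η̄ ∈ ℝ^{ℓd} with σ_{M_i}(η̄) ≥ 0 for i = 1, …, L such that, writing η̄ = (η̄_1ᵀ, …, η̄_ℓᵀ)ᵀ with each η̄_j ∈ ℝ^d, the d×ℓ matrix B := [η̄_1, …, η̄_ℓ] has rank ℓ. If for every nonzero η ∈ ℝ^{ℓd} the conditions σ_{M_i}(η) ≥ 0 for i = 1, …, L imply σ_{M_0}(η) ≥ 0, then there exist nonnegative scalars λ_1, …, λ_L such that M_0 − Σ_{i=1}^{L} λ_i M_i is positive semidefinite. -/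
open Matrix Kronecker Filter Topology
open scoped InnerProductSpace

/-- The quadratic form `σ_M(η) = ηᵀ (M ⊗ I_d) η` on `ℝ^{ℓd}`. -/
def sigmaQ {ℓ d : ℕ} (M : Matrix (Fin ℓ) (Fin ℓ) ℝ) (η : Fin ℓ × Fin d → ℝ) : ℝ :=
  η ⬝ᵥ ((M ⊗ₖ (1 : Matrix (Fin d) (Fin d) ℝ)).mulVec η)

namespace SL

variable {ℓ L : ℕ}

def ip (X Y : Matrix (Fin ℓ) (Fin ℓ) ℝ) : ℝ := ∑ j, ∑ k, X j k * Y j k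


variable {ℓ : ℕ}

/-- Frobenius pairing of two square matrices. -/

lemma ip_zero_right (X : Matrix (Fin ℓ) (Fin ℓ) ℝ) : ip X 0 = 0 := by simp [ip]

lemma ip_add_right (X Y Z : Matrix (Fin ℓ) (Fin ℓ) ℝ) :
    ip X (Y + Z) = ip X Y + ip X Z := by
  simp [ip, mul_add, Finset.sum_add_distrib]

lemma ip_smul_right (c : ℝ) (X Y : Matrix (Fin ℓ) (Fin ℓ) ℝ) :
    ip X (c • Y) = c * ip X Y := by
  simp [ip, Finset.mul_sum, Matrix.smul_apply, smul_eq_mul]; ring_nf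
  exact Finset.sum_congr rfl fun j _ => Finset.sum_congr rfl fun k _ => by ring

lemma ip_smul_left (c : ℝ) (X Y : Matrix (Fin ℓ) (Fin ℓ) ℝ) :
    ip (c • X) Y = c * ip X Y := by
  simp only [ip, Finset.mul_sum, Matrix.smul_apply, smul_eq_mul]
  exact Finset.sum_congr rfl fun j _ => Finset.sum_congr rfl fun k _ => by ring

lemma ip_sub_left (X Y Z : Matrix (Fin ℓ) (Fin ℓ) ℝ) :
    ip (X - Y) Z = ip X Z - ip Y Z := by
  simp [ip, sub_mul, Finset.sum_sub_distrib]

lemma ip_zero_left (Y : Matrix (Fin ℓ) (Fin ℓ) ℝ) : ip 0 Y = 0 := by simp [ip]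

lemma ip_sum_smul_left {L : ℕ} (f : Fin L → ℝ) (M : Fin L → Matrix (Fin ℓ) (Fin ℓ) ℝ)
    (Y : Matrix (Fin ℓ) (Fin ℓ) ℝ) :
    ip (∑ i, f i • M i) Y = ∑ i, f i * ip (M i) Y := by
  rw [ip]
  have h0 : ∀ j k, (∑ i, f i • M i) j k = ∑ i, f i * M i j k := by
    intro j k; simp [Matrix.sum_apply]
  simp_rw [h0, Finset.sum_mul]
  have swap1 : ∀ j, ∑ k, ∑ i, (f i * M i j k) * Y j k = ∑ i, ∑ k, (f i * M i j k) * Y j k :=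
    fun j => Finset.sum_comm
  simp_rw [swap1]
  rw [Finset.sum_comm]
  simp [ip, Finset.mul_sum, mul_assoc]

lemma ip_transpose_right (X Y : Matrix (Fin ℓ) (Fin ℓ) ℝ) : ip X Yᵀ = ip Xᵀ Y := by
  rw [ip, Finset.sum_comm]
  simp [ip, Matrix.transpose_apply, mul_comm]

lemma ip_eq_trace (X Y : Matrix (Fin ℓ) (Fin ℓ) ℝ) : ip X Y = ((Xᵀ * Y).trace) := by
  rw [ip, Finset.sum_comm]
  simp [Matrix.trace, Matrix.diag, Matrix.mul_apply, Matrix.transpose_apply]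

lemma ip_gram {m n : ℕ} (A : Matrix (Fin m) (Fin ℓ) ℝ) (B : Matrix (Fin n) (Fin ℓ) ℝ) :
    ip (Aᵀ * A) (Bᵀ * B) = ∑ s, ∑ r, ((A * Bᵀ) s r)^2 := by
  rw [ip_eq_trace, Matrix.transpose_mul, Matrix.transpose_transpose]
  have h1 : (Aᵀ * A) * (Bᵀ * B) = Aᵀ * ((A * Bᵀ) * B) := by
    simp [Matrix.mul_assoc]
  rw [h1, Matrix.trace_mul_comm]
  have h2 : ((A * Bᵀ) * B) * Aᵀ = (A * Bᵀ) * (A * Bᵀ)ᵀ := by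
    rw [Matrix.transpose_mul, Matrix.transpose_transpose, Matrix.mul_assoc]
  rw [h2]
  simp only [Matrix.trace, Matrix.diag, Matrix.mul_apply, Matrix.transpose_apply, sq]






/-- decomposition of a real PSD matrix as `AᵀA`. -/
lemma psd_decomp {P : Matrix (Fin ℓ) (Fin ℓ) ℝ} (hP : P.PosSemidef) :
    ∃ A : Matrix (Fin ℓ) (Fin ℓ) ℝ, P = Aᵀ * A := by
  open scoped MatrixOrder Matrix.Norms.L2Operator in
  obtain ⟨A, hA⟩ := CStarAlgebra.nonneg_iff_eq_star_mul_self.mp hP.nonneg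
  exact ⟨A, by rw [hA, Matrix.star_eq_conjTranspose, Matrix.conjTranspose_eq_transpose_of_trivial]⟩

lemma psd_ip_gram_nonneg {d : ℕ} {P : Matrix (Fin ℓ) (Fin ℓ) ℝ} (hP : P.PosSemidef)
    (B : Matrix (Fin d) (Fin ℓ) ℝ) : 0 ≤ ip P (Bᵀ * B) := by
  obtain ⟨A, rfl⟩ := psd_decomp hP
  rw [ip_gram]
  exact Finset.sum_nonneg fun s _ => Finset.sum_nonneg fun r _ => sq_nonneg _

lemma psd_ip_gram_zero {d : ℕ} {P : Matrix (Fin ℓ) (Fin ℓ) ℝ} (hP : P.PosSemidef)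
    (B : Matrix (Fin d) (Fin ℓ) ℝ) (hB : ∀ v, B *ᵥ v = 0 → v = 0)
    (h : ip P (Bᵀ * B) = 0) : P = 0 := by
  obtain ⟨A, rfl⟩ := psd_decomp hP
  rw [ip_gram] at h
  have hsq : ∀ s r, (A * Bᵀ) s r = 0 := by
    intro s r
    have h1 := (Finset.sum_eq_zero_iff_of_nonneg
      (fun s _ => Finset.sum_nonneg fun r _ => sq_nonneg ((A * Bᵀ) s r))).mp h s (Finset.mem_univ s)
    have h2 := (Finset.sum_eq_zero_iff_of_nonneg
      (fun r _ => sq_nonneg ((A * Bᵀ) s r))).mp h1 r (Finset.mem_univ r)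
    exact pow_eq_zero_iff two_ne_zero |>.mp h2
  have hA : A = 0 := by
    ext j c
    have : B *ᵥ (fun c => A j c) = 0 := by
      funext r
      have := hsq j r
      simp only [Matrix.mul_apply, Matrix.transpose_apply] at this
      simpa [Matrix.mulVec, dotProduct, mul_comm] using this
    have := congrFun (hB _ this) c
    simpa using this
  rw [hA]; simp

lemma psd_smul {P : Matrix (Fin ℓ) (Fin ℓ) ℝ} (hP : P.PosSemidef) {c : ℝ} (hc : 0 ≤ c) :
    (c • P).PosSemidef := by
  rw [Matrix.posSemidef_iff_dotProduct_mulVec] at hP ⊢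
  constructor
  · have h1 := hP.1
    rw [Matrix.IsHermitian] at h1 ⊢
    rw [Matrix.conjTranspose_smul, h1]
    simp
  · intro x
    rw [Matrix.smul_mulVec, dotProduct_smul]
    exact mul_nonneg hc (hP.2 x)

lemma continuous_entry (i j : Fin ℓ) :
    Continuous fun X : Matrix (Fin ℓ) (Fin ℓ) ℝ => X i j :=
  (continuous_apply j).comp (continuous_apply i)

lemma isClosed_psd : IsClosed {X : Matrix (Fin ℓ) (Fin ℓ) ℝ | X.PosSemidef} := by
  have hset : {X : Matrix (Fin ℓ) (Fin ℓ) ℝ | X.PosSemidef} =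
      (⋂ i, ⋂ j, {X : Matrix (Fin ℓ) (Fin ℓ) ℝ | X j i = X i j}) ∩
      ⋂ v : Fin ℓ → ℝ, {X | 0 ≤ dotProduct (star v) (X *ᵥ v)} := by
    ext X
    simp only [Set.mem_setOf_eq, Set.mem_inter_iff, Set.mem_iInter, Matrix.posSemidef_iff_dotProduct_mulVec]
    constructor
    · rintro ⟨h1, h2⟩
      refine ⟨fun i j => ?_, fun v => h2 v⟩
      have := congrFun (congrFun h1 i) j
      simpa [Matrix.conjTranspose_apply] using this
    · rintro ⟨h1, h2⟩
      refine ⟨?_, fun v => h2 v⟩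
      ext i j
      simpa [Matrix.conjTranspose_apply] using h1 i j
  rw [hset]
  refine IsClosed.inter (isClosed_iInter fun i => isClosed_iInter fun j =>
    isClosed_eq (continuous_entry j i) (continuous_entry i j)) (isClosed_iInter fun v => ?_)
  refine isClosed_le continuous_const ?_
  have : Continuous fun X : Matrix (Fin ℓ) (Fin ℓ) ℝ =>
      dotProduct (star v) (X *ᵥ v) := by
    simp only [dotProduct, Matrix.mulVec]
    refine continuous_finset_sum _ fun i _ => Continuous.mul continuous_const ?_
    exact continuous_finset_sum _ fun j _ => (continuous_entry i j).mul continuous_const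
  exact this





/-- `sigmaQ M η` equals the Frobenius pairing of `M` with the Gram matrix of `η`. -/
lemma sigmaQ_eq {d : ℕ} (M : Matrix (Fin ℓ) (Fin ℓ) ℝ) (η : Fin ℓ × Fin d → ℝ) :
    sigmaQ M η = ip M ((Matrix.of fun (r : Fin d) (c : Fin ℓ) => η (c, r))ᵀ *
      (Matrix.of fun (r : Fin d) (c : Fin ℓ) => η (c, r))) := by
  rw [sigmaQ, dotProduct]
  have hcomp : ∀ p : Fin ℓ × Fin d,
      ((M ⊗ₖ (1 : Matrix (Fin d) (Fin d) ℝ)) *ᵥ η) p = ∑ k, M p.1 k * η (k, p.2) := by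
    intro p
    rw [Matrix.mulVec, dotProduct, Fintype.sum_prod_type]
    refine Finset.sum_congr rfl fun k _ => ?_
    rw [Finset.sum_eq_single p.2]
    · simp [Matrix.kroneckerMap_apply]
    · intro s _ hs
      simp [Matrix.kroneckerMap_apply, Matrix.one_apply, Ne.symm hs]
    · simp
  simp_rw [hcomp]
  rw [Fintype.sum_prod_type]
  -- LHS: ∑ j ∑ r, η (j,r) * ∑ k, M j k * η (k,r)
  rw [ip]
  simp only [Matrix.mul_apply, Matrix.transpose_apply, Matrix.of_apply]
  -- RHS: ∑ j ∑ k, M j k * ∑ r, η (j,r) * η (k,r)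
  refine Finset.sum_congr rfl fun j _ => ?_
  simp_rw [Finset.mul_sum]
  rw [Finset.sum_comm]
  refine Finset.sum_congr rfl fun k _ => Finset.sum_congr rfl fun r _ => by ring

/-- Padding an `ℓ×ℓ` matrix to a `d×ℓ` matrix with the same Gram matrix. -/
lemma pad_gram {d : ℕ} (hd : ℓ ≤ d) (N : Matrix (Fin ℓ) (Fin ℓ) ℝ) :
    ∃ B : Matrix (Fin d) (Fin ℓ) ℝ, Bᵀ * B = Nᵀ * N := by
  refine ⟨Matrix.of fun r c => if h : (r : ℕ) < ℓ then N ⟨r, h⟩ c else 0, ?_⟩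
  ext j k
  simp only [Matrix.mul_apply, Matrix.transpose_apply, Matrix.of_apply]
  have key : ∀ m : ℕ, ∀ hm : m < d,
      (if h : m < ℓ then N ⟨m, h⟩ j else 0) * (if h : m < ℓ then N ⟨m, h⟩ k else 0)
      = if h : m < ℓ then N ⟨m, h⟩ j * N ⟨m, h⟩ k else 0 := by
    intro m hm; split_ifs <;> simp
  calc (∑ r : Fin d, (if h : (r : ℕ) < ℓ then N ⟨r, h⟩ j else 0) *
          (if h : (r : ℕ) < ℓ then N ⟨r, h⟩ k else 0))
      = ∑ r : Fin d, (if h : (r : ℕ) < ℓ then N ⟨r, h⟩ j * N ⟨r, h⟩ k else 0) :=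
        Finset.sum_congr rfl fun r _ => key r r.2
    _ = ∑ m ∈ Finset.range d, (if h : m < ℓ then N ⟨m, h⟩ j * N ⟨m, h⟩ k else 0) :=
        Fin.sum_univ_eq_sum_range (fun m => if h : m < ℓ then N ⟨m, h⟩ j * N ⟨m, h⟩ k else 0) d
    _ = ∑ m ∈ Finset.range ℓ, (if h : m < ℓ then N ⟨m, h⟩ j * N ⟨m, h⟩ k else 0) := by
        refine (Finset.sum_subset (Finset.range_subset_range.mpr hd) fun m _ hm => ?_).symm
        rw [Finset.mem_range, not_lt] at hm
        rw [dif_neg (by omega)]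
    _ = ∑ r : Fin ℓ, N r j * N r k := by
        rw [← Fin.sum_univ_eq_sum_range (fun m => if h : m < ℓ then N ⟨m, h⟩ j * N ⟨m, h⟩ k else 0)]
        refine Finset.sum_congr rfl fun r _ => ?_
        rw [dif_pos r.2]

/-- full column rank implies trivial kernel of `mulVec`. -/
lemma rank_inj {d : ℕ} (B : Matrix (Fin d) (Fin ℓ) ℝ) (hrank : B.rank = ℓ) :
    ∀ v : Fin ℓ → ℝ, B *ᵥ v = 0 → v = 0 := by
  have hker : LinearMap.ker B.mulVecLin = ⊥ := by
    have h1 := LinearMap.finrank_range_add_finrank_ker B.mulVecLin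
    rw [Matrix.rank] at hrank
    rw [hrank] at h1
    simp only [Module.finrank_pi, Fintype.card_fin] at h1
    have : Module.finrank ℝ (LinearMap.ker B.mulVecLin) = 0 := by omega
    exact Submodule.finrank_eq_zero.mp this
  intro v hv
  have : v ∈ LinearMap.ker B.mulVecLin := by
    rw [LinearMap.mem_ker, Matrix.mulVecLin_apply, hv]
  rw [hker] at this
  simpa using this






/-- The set of matrices of the form `P + ∑ λᵢ Mᵢ` with `P` PSD, `λ ≥ 0` supported on `s`. -/
def Dset (M : Fin L → Matrix (Fin ℓ) (Fin ℓ) ℝ) (s : Finset (Fin L)) :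
    Set (Matrix (Fin ℓ) (Fin ℓ) ℝ) :=
  {X | ∃ (P : Matrix (Fin ℓ) (Fin ℓ) ℝ) (lam : Fin L → ℝ), P.PosSemidef ∧ (∀ i, 0 ≤ lam i) ∧ (∀ i ∉ s, lam i = 0) ∧
    X = P + ∑ i, lam i • M i}

instance : SequentialSpace (Matrix (Fin ℓ) (Fin ℓ) ℝ) :=
  inferInstanceAs (SequentialSpace (Fin ℓ → Fin ℓ → ℝ))

theorem isClosed_Dset (M : Fin L → Matrix (Fin ℓ) (Fin ℓ) ℝ) (Gb : Matrix (Fin ℓ) (Fin ℓ) ℝ)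
    (hGbnn : ∀ P : Matrix (Fin ℓ) (Fin ℓ) ℝ, P.PosSemidef → 0 ≤ ip P Gb)
    (hGb0 : ∀ P : Matrix (Fin ℓ) (Fin ℓ) ℝ, P.PosSemidef → ip P Gb = 0 → P = 0)
    (hMGb : ∀ i, 0 ≤ ip (M i) Gb) (s : Finset (Fin L)) :
    IsClosed (Dset M s) := by
  induction s using Finset.strongInduction with
  | _ s ih =>
  by_cases hex : ∃ μ : Fin L → ℝ, (∀ i, 0 ≤ μ i) ∧ (∀ i ∉ s, μ i = 0) ∧ (∃ j, 0 < μ j) ∧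
      ∑ i, μ i • M i = 0
  · obtain ⟨μ, hμ0, hμs, ⟨j₁, hj₁⟩, hμM⟩ := hex
    have hj₁s : j₁ ∈ s := by
      by_contra h
      rw [hμs j₁ h] at hj₁; exact lt_irrefl 0 hj₁
    set T : Finset (Fin L) := s.filter (fun j => 0 < μ j) with hT
    have hTne : T.Nonempty := ⟨j₁, Finset.mem_filter.mpr ⟨hj₁s, hj₁⟩⟩
    have hrep : Dset M s = ⋃ j ∈ T, Dset M (s.erase j) := by
      apply Set.Subset.antisymm
      · rintro X ⟨P, lam, hP, hlam, hsupp, rfl⟩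
        obtain ⟨j₀, hj₀T, hj₀⟩ := Finset.exists_mem_eq_inf' hTne (fun i => lam i / μ i)
        set t : ℝ := T.inf' hTne (fun i => lam i / μ i) with ht
        have hμj₀ : 0 < μ j₀ := (Finset.mem_filter.mp hj₀T).2
        have htnn : 0 ≤ t := by
          rw [hj₀]
          exact div_nonneg (hlam j₀) hμj₀.le
        have hlam' : ∀ i, 0 ≤ lam i - t * μ i := by
          intro i
          by_cases hi : i ∈ T
          · have h1 : t ≤ lam i / μ i := Finset.inf'_le _ hi
            have hμi : 0 < μ i := (Finset.mem_filter.mp hi).2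
            have := (le_div_iff₀ hμi).mp h1
            linarith
          · have hμi : μ i = 0 := by
              by_cases his : i ∈ s
              · have h2 : ¬ 0 < μ i := fun h => hi (Finset.mem_filter.mpr ⟨his, h⟩)
                exact le_antisymm (not_lt.mp h2) (hμ0 i)
              · exact hμs i his
            rw [hμi]; simpa using hlam i
        refine Set.mem_biUnion hj₀T ⟨P, fun i => lam i - t * μ i, hP, hlam', ?_, ?_⟩
        · intro i hi
          by_cases hij : i = j₀
          · subst hij
            show lam i - t * μ i = 0
            rw [hj₀]
            field_simp
            ring
          · have his : i ∉ s := fun h => hi (Finset.mem_erase.mpr ⟨hij, h⟩)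
            show lam i - t * μ i = 0
            rw [hsupp i his, hμs i his]
            ring
        · congr 1
          have : ∀ i, (lam i - t * μ i) • M i = lam i • M i - t • (μ i • M i) := by
            intro i; rw [sub_smul, smul_smul]
          simp_rw [this]
          rw [Finset.sum_sub_distrib, ← Finset.smul_sum, hμM, smul_zero, sub_zero]
      · refine Set.iUnion₂_subset fun j _ => ?_
        rintro X ⟨P, lam, hP, hlam, hsupp, rfl⟩
        exact ⟨P, lam, hP, hlam, fun i his => hsupp i
          (fun hmem => his (Finset.mem_of_mem_erase hmem)), rfl⟩
    rw [hrep]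
    exact isClosed_biUnion_finset fun j hj =>
      ih _ (Finset.erase_ssubset (Finset.mem_filter.mp hj).1)
  · -- no recession direction: prove sequential closedness
    apply IsSeqClosed.isClosed
    intro x p hx hlim
    choose P lam hP hlam hsupp hxeq using hx
    set R : ℕ → ℝ := fun n => 1 + ∑ i, lam n i with hRdef
    have hRpos : ∀ n, 0 < R n := by
      intro n
      have : 0 ≤ ∑ i, lam n i := Finset.sum_nonneg fun i _ => hlam n i
      simp only [hRdef]; linarith
    set a : ℕ → ℝ := fun n => (R n)⁻¹ with hadef
    set ν : ℕ → Fin L → ℝ := fun n i => lam n i / R n with hνdef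
    have hamem : ∀ n, a n ∈ Set.Icc (0:ℝ) 1 := by
      intro n
      constructor
      · exact inv_nonneg.mpr (hRpos n).le
      · have h1 : (1:ℝ) ≤ R n := by
          have : 0 ≤ ∑ i, lam n i := Finset.sum_nonneg fun i _ => hlam n i
          simp only [hRdef]; linarith
        simpa [hadef] using inv_le_one_of_one_le₀ h1
    have hνmem : ∀ n, ν n ∈ Set.Icc (0 : Fin L → ℝ) 1 := by
      intro n
      rw [Set.mem_Icc]
      constructor
      · intro i
        exact div_nonneg (hlam n i) (hRpos n).le
      · intro i
        have h1 : lam n i ≤ R n := by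
          have h2 : lam n i ≤ ∑ i, lam n i :=
            Finset.single_le_sum (fun i _ => hlam n i) (Finset.mem_univ i)
          simp only [hRdef]; linarith
        show lam n i / R n ≤ 1
        exact (div_le_one (hRpos n)).mpr h1
    obtain ⟨aInf, haInfmem, φ₁, hφ₁mono, hφ₁tend⟩ :=
      (isCompact_Icc (a := (0:ℝ)) (b := 1)).tendsto_subseq hamem
    obtain ⟨μ, hμmem, φ₂, hφ₂mono, hφ₂tend⟩ :=
      (isCompact_Icc (a := (0 : Fin L → ℝ)) (b := 1)).tendsto_subseq (fun n => hνmem (φ₁ n))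
    set φ : ℕ → ℕ := φ₁ ∘ φ₂ with hφdef
    have hφmono : StrictMono φ := hφ₁mono.comp hφ₂mono
    have hA : Tendsto (fun n => a (φ n)) atTop (𝓝 aInf) :=
      hφ₁tend.comp hφ₂mono.tendsto_atTop
    have hV : Tendsto (fun n => ν (φ n)) atTop (𝓝 μ) := hφ₂tend
    have hVi : ∀ i, Tendsto (fun n => ν (φ n) i) atTop (𝓝 (μ i)) :=
      fun i => ((continuous_apply i).tendsto μ).comp hV
    have hμ0 : ∀ i, 0 ≤ μ i := fun i => (Set.mem_Icc.mp hμmem).1 i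
    have hμsupp : ∀ i ∉ s, μ i = 0 := by
      intro i his
      have hz : ∀ n, ν (φ n) i = 0 := by
        intro n; simp [hνdef, hsupp _ i his]
      have : Tendsto (fun n => ν (φ n) i) atTop (𝓝 0) := by
        simp only [hz]; exact tendsto_const_nhds
      exact tendsto_nhds_unique (hVi i) this
    have hxφ : Tendsto (fun n => x (φ n)) atTop (𝓝 p) :=
      hlim.comp hφmono.tendsto_atTop
    have haInf0 : 0 ≤ aInf := haInfmem.1
    have hsum1 : aInf + ∑ i, μ i = 1 := by
      have hn : ∀ n, a n + ∑ i, ν n i = 1 := by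
        intro n
        simp only [hadef, hνdef]
        rw [← Finset.sum_div]
        rw [inv_eq_one_div, ← add_div]
        exact div_self (ne_of_gt (hRpos n))
      have h1 : Tendsto (fun n => a (φ n) + ∑ i, ν (φ n) i) atTop (𝓝 (aInf + ∑ i, μ i)) :=
        hA.add (tendsto_finset_sum _ fun i _ => hVi i)
      have h2 : Tendsto (fun n => a (φ n) + ∑ i, ν (φ n) i) atTop (𝓝 1) := by
        simp only [hn]; exact tendsto_const_nhds
      exact tendsto_nhds_unique h1 h2
    have key : ∀ n, a n • x n = a n • P n + ∑ i, ν n i • M i := by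
      intro n
      rw [hxeq n, smul_add, Finset.smul_sum]
      congr 1
      refine Finset.sum_congr rfl fun i _ => ?_
      rw [smul_smul, hνdef, hadef]
      rw [inv_mul_eq_div]
    by_cases haInf : aInf = 0
    · exfalso
      have hQtend : Tendsto (fun n => a (φ n) • P (φ n)) atTop
          (𝓝 ((0:ℝ) • p - ∑ i, μ i • M i)) := by
        have h1 : Tendsto (fun n => a (φ n) • x (φ n) - ∑ i, ν (φ n) i • M i) atTop
            (𝓝 (aInf • p - ∑ i, μ i • M i)) :=
          (hA.smul hxφ).sub (tendsto_finset_sum _ fun i _ => (hVi i).smul_const (M i))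
        rw [haInf] at h1
        refine Tendsto.congr (fun n => ?_) h1
        rw [key (φ n)]; abel
      have hQPSD : ((0:ℝ) • p - ∑ i, μ i • M i).PosSemidef := by
        refine isClosed_psd.mem_of_tendsto hQtend (Eventually.of_forall fun n => ?_)
        exact psd_smul (hP (φ n)) (inv_nonneg.mpr (hRpos (φ n)).le)
      have hipQ : ip ((0:ℝ) • p - ∑ i, μ i • M i) Gb = - ∑ i, μ i * ip (M i) Gb := by
        rw [zero_smul, ip_sub_left, ip_zero_left, ip_sum_smul_left]; ring
      have hle : ip ((0:ℝ) • p - ∑ i, μ i • M i) Gb ≤ 0 := by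
        rw [hipQ]
        simp only [neg_nonpos]
        exact Finset.sum_nonneg fun i _ => mul_nonneg (hμ0 i) (hMGb i)
      have hge := hGbnn _ hQPSD
      have hQ0 := hGb0 _ hQPSD (le_antisymm hle hge)
      have hμM : ∑ i, μ i • M i = 0 := by
        have := hQ0
        rw [zero_smul, zero_sub, neg_eq_zero] at this
        exact this
      have hjex : ∃ j, 0 < μ j := by
        by_contra h
        push_neg at h
        have : ∀ i, μ i = 0 := fun i => le_antisymm (h i) (hμ0 i)
        rw [haInf] at hsum1
        simp [this] at hsum1
      exact hex ⟨μ, hμ0, hμsupp, hjex, hμM⟩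
    · have haInfpos : 0 < aInf := lt_of_le_of_ne haInf0 (Ne.symm haInf)
      set lamInf : Fin L → ℝ := fun i => aInf⁻¹ * μ i with hlamInfdef
      have hlami : ∀ i, Tendsto (fun n => lam (φ n) i) atTop (𝓝 (lamInf i)) := by
        intro i
        have heq : ∀ n, lam n i = (a n)⁻¹ * ν n i := by
          intro n
          simp only [hadef, hνdef, inv_inv]
          rw [mul_div_cancel₀ _ (ne_of_gt (hRpos n))]
        refine Tendsto.congr (fun n => (heq (φ n)).symm) ?_
        exact (hA.inv₀ haInf).mul (hVi i)
      have hsumM : Tendsto (fun n => ∑ i, lam (φ n) i • M i) atTop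
          (𝓝 (∑ i, lamInf i • M i)) :=
        tendsto_finset_sum _ fun i _ => (hlami i).smul_const (M i)
      have hPtend : Tendsto (fun n => P (φ n)) atTop (𝓝 (p - ∑ i, lamInf i • M i)) := by
        refine Tendsto.congr (fun n => ?_) (hxφ.sub hsumM)
        rw [hxeq (φ n)]; abel
      have hPInf : (p - ∑ i, lamInf i • M i).PosSemidef :=
        isClosed_psd.mem_of_tendsto hPtend (Eventually.of_forall fun n => hP (φ n))
      refine ⟨p - ∑ i, lamInf i • M i, lamInf, hPInf, ?_, ?_, by abel⟩
      · intro i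
        exact mul_nonneg (inv_nonneg.mpr haInfpos.le) (hμ0 i)
      · intro i his
        simp [hlamInfdef, hμsupp i his]





/-- The matrix space as a Euclidean space. -/
noncomputable def mE (ℓ : ℕ) :
    Matrix (Fin ℓ) (Fin ℓ) ℝ ≃ₗ[ℝ] EuclideanSpace ℝ (Fin ℓ × Fin ℓ) :=
  (LinearEquiv.curry ℝ ℝ (Fin ℓ) (Fin ℓ)).symm.trans
    (WithLp.linearEquiv 2 ℝ (Fin ℓ × Fin ℓ → ℝ)).symm

lemma mE_apply (X : Matrix (Fin ℓ) (Fin ℓ) ℝ) (p : Fin ℓ × Fin ℓ) :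
    mE ℓ X p = X p.1 p.2 := rfl

lemma inner_mE (X : Matrix (Fin ℓ) (Fin ℓ) ℝ) (y : EuclideanSpace ℝ (Fin ℓ × Fin ℓ)) :
    ⟪mE ℓ X, y⟫_ℝ = ip X (Matrix.of fun j k => y (j, k)) := by
  rw [PiLp.inner_apply, ip]
  rw [Fintype.sum_prod_type (f := fun p : Fin ℓ × Fin ℓ => ⟪mE ℓ X p, y p⟫_ℝ)]
  refine Finset.sum_congr rfl fun j _ => Finset.sum_congr rfl fun k _ => ?_
  simp only [mE_apply, RCLike.inner_apply, conj_trivial, Matrix.of_apply]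
  ring


end SL
open SL

theorem lossless_s_procedure
    {ℓ d L : ℕ} (hd : ℓ ≤ d)
    (M₀ : Matrix (Fin ℓ) (Fin ℓ) ℝ) (M : Fin L → Matrix (Fin ℓ) (Fin ℓ) ℝ)
    (hM₀ : M₀.IsSymm) (hM : ∀ i, (M i).IsSymm)
    (ηbar : Fin ℓ × Fin d → ℝ)
    (hηbar : ∀ i, 0 ≤ sigmaQ (M i) ηbar)
    (hrank : (Matrix.of fun (r : Fin d) (c : Fin ℓ) => ηbar (c, r)).rank = ℓ)
    (himp : ∀ η : Fin ℓ × Fin d → ℝ, η ≠ 0 →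
      (∀ i, 0 ≤ sigmaQ (M i) η) → 0 ≤ sigmaQ M₀ η) :
    ∃ lam : Fin L → ℝ, (∀ i, 0 ≤ lam i) ∧ (M₀ - ∑ i, lam i • M i).PosSemidef := by
  classical
  set Bbar : Matrix (Fin d) (Fin ℓ) ℝ := Matrix.of fun r c => ηbar (c, r) with hBbar
  set Gbar : Matrix (Fin ℓ) (Fin ℓ) ℝ := Bbarᵀ * Bbar with hGbar
  have hinj : ∀ v : Fin ℓ → ℝ, Bbar *ᵥ v = 0 → v = 0 := rank_inj Bbar hrank
  have hGbnn : ∀ P : Matrix (Fin ℓ) (Fin ℓ) ℝ, P.PosSemidef → 0 ≤ ip P Gbar :=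
    fun P hP => psd_ip_gram_nonneg hP Bbar
  have hGb0 : ∀ P : Matrix (Fin ℓ) (Fin ℓ) ℝ, P.PosSemidef → ip P Gbar = 0 → P = 0 :=
    fun P hP h => psd_ip_gram_zero hP Bbar hinj h
  have hMGb : ∀ i, 0 ≤ ip (M i) Gbar := by
    intro i
    have := hηbar i
    rwa [sigmaQ_eq] at this
  -- main claim: M₀ lies in the closed convex cone generated by PSD matrices and the `M i`
  have hmem : M₀ ∈ Dset M Finset.univ := by
    by_contra hMem
    -- transfer the cone to Euclidean space and separate
    set K : ConvexCone ℝ (EuclideanSpace ℝ (Fin ℓ × Fin ℓ)) :=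
      { carrier := mE ℓ '' Dset M Finset.univ
        smul_mem' := by
          rintro c hc x ⟨X, ⟨P, lam, hP, hlam, _, rfl⟩, rfl⟩
          refine ⟨c • (P + ∑ i, lam i • M i), ⟨c • P, fun i => c * lam i,
            psd_smul hP hc.le, fun i => mul_nonneg hc.le (hlam i),
            fun i hi => absurd (Finset.mem_univ i) hi, ?_⟩, (mE ℓ).map_smul c _⟩
          rw [smul_add, Finset.smul_sum]
          congr 1
          exact Finset.sum_congr rfl fun i _ => smul_smul c (lam i) (M i)
        add_mem' := by
          rintro x ⟨X, ⟨P, lam, hP, hlam, _, rfl⟩, rfl⟩ y ⟨Y, ⟨Q, ka, hQ, hka, _, rfl⟩, rfl⟩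
          refine ⟨_, ⟨P + Q, fun i => lam i + ka i, hP.add hQ,
            fun i => add_nonneg (hlam i) (hka i),
            fun i hi => absurd (Finset.mem_univ i) hi, ?_⟩, (mE ℓ).map_add _ _⟩
          have h2 : ∀ i, (lam i + ka i) • M i = lam i • M i + ka i • M i :=
            fun i => add_smul _ _ _
          simp_rw [h2]
          rw [Finset.sum_add_distrib]
          abel } with hK
    have hKne : (K : Set (EuclideanSpace ℝ (Fin ℓ × Fin ℓ))).Nonempty :=
      ⟨mE ℓ 0, 0, ⟨0, 0, Matrix.PosSemidef.zero, fun i => le_refl _,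
        fun i _ => rfl, by simp⟩, rfl⟩
    have hKcl : IsClosed (K : Set (EuclideanSpace ℝ (Fin ℓ × Fin ℓ))) := by
      have hD : IsClosed (Dset M Finset.univ) :=
        isClosed_Dset M Gbar hGbnn hGb0 hMGb Finset.univ
      have : (K : Set (EuclideanSpace ℝ (Fin ℓ × Fin ℓ))) =
          (mE ℓ).toContinuousLinearEquiv.toHomeomorph '' Dset M Finset.univ := by
        simp [hK, LinearEquiv.coe_toContinuousLinearEquiv']
      rw [this]
      exact ((mE ℓ).toContinuousLinearEquiv.toHomeomorph.isClosedMap _) hD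
    have hbK : mE ℓ M₀ ∉ K := by
      rintro ⟨X, hX, hXe⟩
      exact hMem ((mE ℓ).injective hXe ▸ hX)
    obtain ⟨y, hy1, hy2⟩ :=
      ProperCone.hyperplane_separation' (⟨K.toPointedCone (.of_nonempty_of_isClosed hKne hKcl), hKcl⟩ : ProperCone ℝ _) hbK
    set Y : Matrix (Fin ℓ) (Fin ℓ) ℝ := Matrix.of fun j k => y (j, k) with hY
    have hDY : ∀ X ∈ Dset M Finset.univ, 0 ≤ ip X Y := by
      intro X hX
      have := hy1 (mE ℓ X) ⟨X, hX, rfl⟩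
      rwa [inner_mE] at this
    have hMiD : ∀ i, M i ∈ Dset M Finset.univ := by
      intro i
      refine ⟨0, fun k => if k = i then (1:ℝ) else 0, Matrix.PosSemidef.zero, fun k => ?_,
        fun k hk => absurd (Finset.mem_univ k) hk, ?_⟩
      · show (0:ℝ) ≤ if k = i then 1 else 0
        split_ifs <;> norm_num
      · rw [zero_add]
        have h1 : ∀ k, (if k = i then (1:ℝ) else 0) • M k = if k = i then M k else 0 := by
          intro k; split_ifs <;> simp
        simp_rw [h1]
        rw [Finset.sum_ite_eq' Finset.univ i M, if_pos (Finset.mem_univ i)]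
    have hMiY : ∀ i, 0 ≤ ip (M i) Y := fun i => hDY _ (hMiD i)
    have hM0Y : ip M₀ Y < 0 := by
      rw [inner_mE] at hy2
      exact hy2
    have quad : ∀ v : Fin ℓ → ℝ, 0 ≤ v ⬝ᵥ Y *ᵥ v := by
      intro v
      set Rv : Matrix (Fin 1) (Fin ℓ) ℝ := Matrix.of fun _ j => v j with hRv
      have hpsd : (Rvᵀ * Rv).PosSemidef := by
        have := Matrix.posSemidef_conjTranspose_mul_self Rv
        rwa [Matrix.conjTranspose_eq_transpose_of_trivial] at this
      have hmemD : Rvᵀ * Rv ∈ Dset M Finset.univ :=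
        ⟨Rvᵀ * Rv, 0, hpsd, fun i => le_refl _, fun i _ => rfl, by simp⟩
      have h0 := hDY _ hmemD
      have heq : ip (Rvᵀ * Rv) Y = v ⬝ᵥ Y *ᵥ v := by
        rw [ip, dotProduct]
        simp only [Matrix.mul_apply, Matrix.transpose_apply, Matrix.of_apply,
          Matrix.mulVec, dotProduct, Finset.mul_sum, Finset.sum_const,
          Finset.card_univ, Fintype.card_fin, one_smul]
        refine Finset.sum_congr rfl fun j _ => Finset.sum_congr rfl fun k _ => ?_
        rw [Fin.sum_univ_one]
        show (v j * v k) * Y j k = v j * (Y j k * v k)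
        ring
      rwa [heq] at h0
    set Gs : Matrix (Fin ℓ) (Fin ℓ) ℝ := (2⁻¹ : ℝ) • (Y + Yᵀ) with hGs
    have hGsPSD : Gs.PosSemidef := by
      rw [Matrix.posSemidef_iff_dotProduct_mulVec]
      constructor
      · rw [Matrix.IsHermitian, hGs, Matrix.conjTranspose_smul,
          Matrix.conjTranspose_add, Matrix.conjTranspose_eq_transpose_of_trivial,
          Matrix.conjTranspose_eq_transpose_of_trivial, Matrix.transpose_transpose]
        rw [add_comm]
        norm_num
      · intro z
        have hz : star z = z := by
          funext i; simp
        rw [hz, hGs, Matrix.smul_mulVec, Matrix.add_mulVec,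
          dotProduct_smul, dotProduct_add]
        have h1 : z ⬝ᵥ Yᵀ *ᵥ z = z ⬝ᵥ Y *ᵥ z := by
          rw [Matrix.mulVec_transpose, dotProduct_comm, ← Matrix.dotProduct_mulVec]
        rw [h1, smul_eq_mul]
        have := quad z
        linarith
    have ipGs_eq : ∀ X : Matrix (Fin ℓ) (Fin ℓ) ℝ, X.IsSymm → ip X Gs = ip X Y := by
      intro X hX
      rw [hGs, ip_smul_right, ip_add_right, ip_transpose_right, hX.eq]
      ring
    have hfeas : ∀ i, 0 ≤ ip (M i) Gs := fun i => (ipGs_eq (M i) (hM i)) ▸ hMiY i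
    have hbad : ip M₀ Gs < 0 := (ipGs_eq M₀ hM₀) ▸ hM0Y
    obtain ⟨N, hN⟩ := psd_decomp hGsPSD
    obtain ⟨B, hB⟩ := pad_gram (d := d) hd N
    set η : Fin ℓ × Fin d → ℝ := fun p => B p.2 p.1 with hη
    have hGram : (Matrix.of fun (r : Fin d) (c : Fin ℓ) => η (c, r)) = B := rfl
    have hσ : ∀ Mx : Matrix (Fin ℓ) (Fin ℓ) ℝ, sigmaQ Mx η = ip Mx Gs := by
      intro Mx
      rw [sigmaQ_eq, hGram, hB, ← hN]
    have hηne : η ≠ 0 := by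
      intro h
      have hB0 : B = 0 := by
        ext r c
        have := congrFun h (c, r)
        simpa [hη] using this
      have : Gs = 0 := by
        rw [hN, ← hB, hB0]
        simp
      rw [this, ip_zero_right] at hbad
      exact lt_irrefl 0 hbad
    have := himp η hηne (fun i => by rw [hσ]; exact hfeas i)
    rw [hσ] at this
    linarith
  obtain ⟨P, lam, hPsd, hlamnn, _, heq⟩ := hmem
  refine ⟨lam, hlamnn, ?_⟩
  rw [heq]
  simpa using hPsd
end

section
/- Let M_0, M_1, …, M_L be real symmetric ℓ×ℓ matrices. Consider the primal SDP: minimize Tr(M_0 G) over real symmetric positive semidefinite ℓ×ℓ matrices G with Tr(G) = 1 and Tr(M_i G) ≥ 0 for i = 1, …, L; and its dual: maximize ν over ν ∈ ℝ and λ_1, …, λ_L ≥ 0 with M_0 − Σ_{i=1}^L λ_i M_i − ν I positive semidefinite. Assume the primal is feasible and let (ν_*, λ_*) be an optimal solution of the dual; set J := { i : λ_{*,i} > 0 }. If the modified primal SDP — minimize Tr(M_0 G) over positive semidefinite G with Tr(G) = 1 and Tr(M_i G) ≥ 0 only for i ∈ J — has a unique optimal solution G_{*,J}, then G_{*,J}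 is also an optimal solution of the original primal SDP. -/
open Matrix

/-- `G` is feasible for the primal SDP with constraint matrices `M i`, `i ∈ J`:
`G ⪰ 0`, `Tr G = 1`, and `Tr (M i * G) ≥ 0` for `i ∈ J`. -/
def PrimalFeasible {ℓ L : ℕ} (M : Fin L → Matrix (Fin ℓ) (Fin ℓ) ℝ)
    (J : Finset (Fin L)) (G : Matrix (Fin ℓ) (Fin ℓ) ℝ) : Prop :=
  G.PosSemidef ∧ G.trace = 1 ∧ ∀ i ∈ J, 0 ≤ (M i * G).trace

/-- `G` is optimal for the primal SDP: it is feasible and minimizes `Tr (M₀ * G)`. -/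
def PrimalOptimal {ℓ L : ℕ} (M₀ : Matrix (Fin ℓ) (Fin ℓ) ℝ)
    (M : Fin L → Matrix (Fin ℓ) (Fin ℓ) ℝ) (J : Finset (Fin L))
    (G : Matrix (Fin ℓ) (Fin ℓ) ℝ) : Prop :=
  PrimalFeasible M J G ∧
    ∀ G' : Matrix (Fin ℓ) (Fin ℓ) ℝ, PrimalFeasible M J G' →
      (M₀ * G).trace ≤ (M₀ * G').trace

/-- `(ν, lam)` is feasible for the dual SDP:
`lam i ≥ 0` for `i ∈ J` and `M₀ - ∑_{i ∈ J} lam i • M i - ν • I ⪰ 0`. -/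
def DualFeasible {ℓ L : ℕ} (M₀ : Matrix (Fin ℓ) (Fin ℓ) ℝ)
    (M : Fin L → Matrix (Fin ℓ) (Fin ℓ) ℝ) (J : Finset (Fin L))
    (ν : ℝ) (lam : Fin L → ℝ) : Prop :=
  (∀ i ∈ J, 0 ≤ lam i) ∧
    (M₀ - (∑ i ∈ J, lam i • M i) - ν • (1 : Matrix (Fin ℓ) (Fin ℓ) ℝ)).PosSemidef

/-- `(ν, lam)` is optimal for the dual SDP: it is feasible and maximizes `ν`. -/
def DualOptimal {ℓ L : ℕ} (M₀ : Matrix (Fin ℓ) (Fin ℓ) ℝ)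
    (M : Fin L → Matrix (Fin ℓ) (Fin ℓ) ℝ) (J : Finset (Fin L))
    (ν : ℝ) (lam : Fin L → ℝ) : Prop :=
  DualFeasible M₀ M J ν lam ∧
    ∀ (ν' : ℝ) (lam' : Fin L → ℝ), DualFeasible M₀ M J ν' lam' → ν' ≤ ν


lemma isHermitian_of_isSymm {m : Type*} {A : Matrix m m ℝ} (h : A.IsSymm) : A.IsHermitian := by
  ext i j
  rw [Matrix.conjTranspose_apply, star_trivial]
  exact congrFun (congrFun h i) j

lemma psd_smul {m : Type*} [Fintype m] {A : Matrix m m ℝ} {c : ℝ} (hc : 0 ≤ c)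
    (hA : A.PosSemidef) : (c • A).PosSemidef := by
  refine Matrix.PosSemidef.of_dotProduct_mulVec_nonneg ?_ fun x => ?_
  · unfold Matrix.IsHermitian
    rw [Matrix.conjTranspose_smul, star_trivial, hA.1]
  · rw [Matrix.smul_mulVec, dotProduct_smul, smul_eq_mul]
    exact mul_nonneg hc (hA.dotProduct_mulVec_nonneg x)

lemma psd_diag_nonneg {m : Type*} [Fintype m] [DecidableEq m] {A : Matrix m m ℝ}
    (hA : A.PosSemidef) (i : m) : 0 ≤ A i i := by
  simpa using hA.dotProduct_mulVec_nonneg (Pi.single i 1)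

lemma psd_trace_nonneg {m : Type*} [Fintype m] [DecidableEq m] {A : Matrix m m ℝ}
    (hA : A.PosSemidef) : 0 ≤ A.trace := by
  exact Finset.sum_nonneg fun i _ => psd_diag_nonneg hA i

lemma trace_mul_psd_nonneg {m : Type*} [Fintype m] [DecidableEq m] {A B : Matrix m m ℝ}
    (hA : A.PosSemidef) (hB : B.PosSemidef) : 0 ≤ (A * B).trace := by
  obtain ⟨C, hC⟩ : ∃ C : Matrix m m ℝ, B = Cᴴ * C := by
    open scoped MatrixOrder in
    obtain ⟨X, hX, -, hXB⟩ :=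
      CFC.exists_sqrt_of_isSelfAdjoint_of_quasispectrumRestricts hB.isHermitian
        (QuasispectrumRestricts.nnreal_of_nonneg hB.nonneg)
    exact ⟨X, by rw [← hXB, ← Matrix.star_eq_conjTranspose, hX.star_eq]⟩
  have h1 : (A * B).trace = (C * A * Cᴴ).trace := by
    rw [hC, ← Matrix.mul_assoc, Matrix.trace_mul_comm, ← Matrix.mul_assoc]
  rw [h1]
  exact psd_trace_nonneg (hA.mul_mul_conjTranspose_same C)

lemma psd_vecMulVec {m : Type*} [Fintype m] (x : m → ℝ) : (Matrix.vecMulVec x x).PosSemidef := by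
  have hmv : ∀ y : m → ℝ, Matrix.vecMulVec x x *ᵥ y = (x ⬝ᵥ y) • x := by
    intro y; funext i
    simp only [Matrix.mulVec, dotProduct, Matrix.vecMulVec_apply, Pi.smul_apply,
      smul_eq_mul, Finset.sum_mul]
    exact Finset.sum_congr rfl fun j _ => by ring
  refine Matrix.PosSemidef.of_dotProduct_mulVec_nonneg ?_ fun y => ?_
  · unfold Matrix.IsHermitian
    ext i j
    simp [Matrix.conjTranspose_apply, Matrix.vecMulVec_apply, mul_comm]
  · rw [star_trivial, hmv, dotProduct_smul, smul_eq_mul, dotProduct_comm]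
    exact mul_self_nonneg _

lemma trace_mul_vecMulVec {m : Type*} [Fintype m] (A : Matrix m m ℝ) (x : m → ℝ) :
    (A * Matrix.vecMulVec x x).trace = x ⬝ᵥ A *ᵥ x := by
  simp only [Matrix.trace, Matrix.diag, Matrix.mul_apply, Matrix.vecMulVec_apply,
    dotProduct, Matrix.mulVec, Finset.mul_sum]
  exact Finset.sum_congr rfl fun i _ => Finset.sum_congr rfl fun j _ => by ring

lemma trace_vecMulVec' {m : Type*} [Fintype m] (x : m → ℝ) :
    (Matrix.vecMulVec x x).trace = x ⬝ᵥ x := by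
  simp [Matrix.trace, Matrix.diag, Matrix.vecMulVec_apply, dotProduct]

lemma dot_sum_mulVec {m ι : Type*} [Fintype m] (s : Finset ι) (w : ι → ℝ)
    (N : ι → Matrix m m ℝ) (x : m → ℝ) :
    x ⬝ᵥ ((∑ i ∈ s, w i • N i) *ᵥ x) = ∑ i ∈ s, w i * (x ⬝ᵥ N i *ᵥ x) := by
  classical
  induction s using Finset.cons_induction with
  | empty => simp
  | cons i s hi ih =>
    rw [Finset.sum_cons, Finset.sum_cons, Matrix.add_mulVec, dotProduct_add, ih,
      Matrix.smul_mulVec, dotProduct_smul, smul_eq_mul]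

lemma weak_duality {ℓ L : ℕ} {M₀ : Matrix (Fin ℓ) (Fin ℓ) ℝ}
    {M : Fin L → Matrix (Fin ℓ) (Fin ℓ) ℝ} {J : Finset (Fin L)} {ν : ℝ} {lam : Fin L → ℝ}
    (hd : DualFeasible M₀ M J ν lam) {G : Matrix (Fin ℓ) (Fin ℓ) ℝ}
    (hG : PrimalFeasible M J G) : ν ≤ (M₀ * G).trace := by
  have h1 : 0 ≤ ((M₀ - (∑ i ∈ J, lam i • M i) - ν • 1) * G).trace :=
    trace_mul_psd_nonneg hd.2 hG.1
  have h2 : ((M₀ - (∑ i ∈ J, lam i • M i) - ν • 1) * G).trace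
      = (M₀ * G).trace - (∑ i ∈ J, lam i * (M i * G).trace) - ν := by
    rw [Matrix.sub_mul, Matrix.sub_mul, Matrix.trace_sub, Matrix.trace_sub,
      Finset.sum_mul, Matrix.trace_sum, smul_mul_assoc, Matrix.trace_smul, Matrix.one_mul,
      hG.2.1, smul_eq_mul, mul_one]
    congr 1
    congr 1
    exact Finset.sum_congr rfl fun i _ => by rw [smul_mul_assoc, Matrix.trace_smul, smul_eq_mul]
  have h3 : 0 ≤ ∑ i ∈ J, lam i * (M i * G).trace :=
    Finset.sum_nonneg fun i hi => mul_nonneg (hd.1 i hi) (hG.2.2 i hi)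
  rw [h2] at h1
  linarith

lemma farkas {ℓ L : ℕ} (M₀ : Matrix (Fin ℓ) (Fin ℓ) ℝ) (M : Fin L → Matrix (Fin ℓ) (Fin ℓ) ℝ)
    (hM₀ : M₀.IsSymm) (hM : ∀ i, (M i).IsSymm)
    (hfeas : ∃ G, PrimalFeasible M Finset.univ G) (c : ℝ)
    (hempty : ∀ G, PrimalFeasible M Finset.univ G → c < (M₀ * G).trace) :
    ∃ ν' lam', DualFeasible M₀ M Finset.univ ν' lam' ∧ c < ν' := by
  classical
  set K : Set (Matrix (Fin ℓ) (Fin ℓ) ℝ) := {G | G.PosSemidef ∧ G.trace = 1} with hKdef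
  set φ : Matrix (Fin ℓ) (Fin ℓ) ℝ → (Fin (L + 1) → ℝ) :=
    fun G => Fin.cons ((M₀ * G).trace - c) (fun i => (M i * G).trace) with hφdef
  set Q : Set (Fin (L + 1) → ℝ) := {y | y 0 ≤ 0 ∧ ∀ i : Fin L, 0 ≤ y i.succ} with hQdef
  -- K is compact
  have hKsub : K ⊆ {G : Matrix (Fin ℓ) (Fin ℓ) ℝ | ∀ i j, G i j ∈ Set.Icc (-1 : ℝ) 1} := by
    rintro G ⟨hpsd, htr⟩ i j
    have hdiag : ∀ k, 0 ≤ G k k := psd_diag_nonneg hpsd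
    have hdle : ∀ k, G k k ≤ 1 := by
      intro k
      calc G k k ≤ ∑ t, G t t := Finset.single_le_sum (fun t _ => hdiag t) (Finset.mem_univ k)
      _ = 1 := htr
    by_cases hij : i = j
    · subst hij; exact ⟨by linarith [hdiag i], hdle i⟩
    · have hsym : G j i = G i j := by
        have := congrFun (congrFun hpsd.1 i) j
        rw [Matrix.conjTranspose_apply, star_trivial] at this
        exact this
      have hq : ∀ a b : ℝ, 0 ≤ G i i * (a * a) + G i j * (a * b) * 2 + G j j * (b * b) := by
        intro a b
        have h := hpsd.dotProduct_mulVec_nonneg (a • (Pi.single i 1 : Fin ℓ → ℝ) + b • (Pi.single j 1 : Fin ℓ → ℝ))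
        rw [star_trivial] at h
        simp only [dotProduct, Matrix.mulVec, Pi.add_apply, Pi.smul_apply,
          Pi.single_apply, smul_eq_mul, mul_ite, mul_one, mul_zero, ite_mul, zero_mul,
          Finset.mul_sum, Finset.sum_add_distrib, add_mul, mul_add, Finset.sum_ite_eq',
          Finset.mem_univ, if_true] at h
        rw [hsym] at h
        nlinarith [h]
      have hsumle : G i i + G j j ≤ 1 := by
        have : ∑ t ∈ ({i, j} : Finset (Fin ℓ)), G t t ≤ ∑ t, G t t :=
          Finset.sum_le_sum_of_subset_of_nonneg (Finset.subset_univ _)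
            (fun t _ _ => hdiag t)
        rw [Finset.sum_pair hij] at this
        calc G i i + G j j ≤ ∑ t, G t t := this
        _ = 1 := htr
      have h1 := hq 1 1
      have h2 := hq 1 (-1)
      constructor <;> nlinarith [hdiag i, hdiag j]
  have hbox : IsCompact {G : Matrix (Fin ℓ) (Fin ℓ) ℝ | ∀ i j, G i j ∈ Set.Icc (-1 : ℝ) 1} := by
    have heq : {G : Matrix (Fin ℓ) (Fin ℓ) ℝ | ∀ i j, G i j ∈ Set.Icc (-1 : ℝ) 1}
        = Set.univ.pi (fun _ : Fin ℓ => Set.univ.pi fun _ : Fin ℓ => Set.Icc (-1 : ℝ) 1) := by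
      ext G
      constructor
      · exact fun h i _ j _ => h i j
      · exact fun h i j => h i (Set.mem_univ i) j (Set.mem_univ j)
    rw [heq]
    exact isCompact_univ_pi fun _ => isCompact_univ_pi fun _ => isCompact_Icc
  have hKclosed : IsClosed K := by
    have h1 : IsClosed {G : Matrix (Fin ℓ) (Fin ℓ) ℝ | G.trace = 1} :=
      isClosed_eq (continuous_id.matrix_trace) continuous_const
    have h2 : IsClosed {G : Matrix (Fin ℓ) (Fin ℓ) ℝ | Gᴴ = G} :=
      isClosed_eq (continuous_id.matrix_conjTranspose) continuous_id
    have h3 : IsClosed {G : Matrix (Fin ℓ) (Fin ℓ) ℝ | ∀ x : Fin ℓ → ℝ, 0 ≤ star x ⬝ᵥ G *ᵥ x} := by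
      have heq : {G : Matrix (Fin ℓ) (Fin ℓ) ℝ | ∀ x : Fin ℓ → ℝ, 0 ≤ star x ⬝ᵥ G *ᵥ x}
          = ⋂ x : Fin ℓ → ℝ, {G | 0 ≤ star x ⬝ᵥ G *ᵥ x} := by
        ext G; simp [Set.mem_iInter]
      rw [heq]
      exact isClosed_iInter fun x => isClosed_le continuous_const
        (continuous_const.dotProduct (continuous_id.matrix_mulVec continuous_const))
    have heq : K = ({G : Matrix (Fin ℓ) (Fin ℓ) ℝ | Gᴴ = G}
        ∩ {G | ∀ x : Fin ℓ → ℝ, 0 ≤ star x ⬝ᵥ G *ᵥ x}) ∩ {G | G.trace = 1} := by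
      ext G
      constructor
      · rintro ⟨⟨hh, hq⟩, ht⟩; exact ⟨⟨hh, (Matrix.posSemidef_iff_dotProduct_mulVec.mp ⟨hh, hq⟩).2⟩, ht⟩
      · rintro ⟨⟨hh, hq⟩, ht⟩; exact ⟨Matrix.PosSemidef.of_dotProduct_mulVec_nonneg hh hq, ht⟩
    rw [heq]
    exact (h2.inter h3).inter h1
  have hKcompact : IsCompact K := hbox.of_isClosed_subset hKclosed hKsub
  have hKconv : Convex ℝ K := by
    rintro G1 ⟨h1p, h1t⟩ G2 ⟨h2p, h2t⟩ α β hα hβ hαβ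
    refine ⟨(psd_smul hα h1p).add (psd_smul hβ h2p), ?_⟩
    rw [Matrix.trace_add, Matrix.trace_smul, Matrix.trace_smul, h1t, h2t]
    simpa using hαβ
  have hφcont : Continuous φ := by
    refine continuous_pi fun k => ?_
    refine Fin.cases ?_ ?_ k
    · simp only [hφdef, Fin.cons_zero]
      exact ((continuous_const.matrix_mul continuous_id).matrix_trace).sub continuous_const
    · intro i
      simp only [hφdef, Fin.cons_succ]
      exact (continuous_const.matrix_mul continuous_id).matrix_trace
  have hscompact : IsCompact (φ '' K) := hKcompact.image hφcont
  have hsconv : Convex ℝ (φ '' K) := by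
    rintro y1 ⟨G1, hG1, rfl⟩ y2 ⟨G2, hG2, rfl⟩ α β hα hβ hαβ
    refine ⟨α • G1 + β • G2, hKconv hG1 hG2 hα hβ hαβ, ?_⟩
    funext k
    refine Fin.cases ?_ ?_ k
    · simp only [hφdef, Fin.cons_zero, Pi.add_apply, Pi.smul_apply, smul_eq_mul,
        Matrix.mul_add, Matrix.trace_add, Matrix.mul_smul, Matrix.trace_smul]
      linear_combination c * hαβ
    · intro i
      simp only [hφdef, Fin.cons_succ, Pi.add_apply, Pi.smul_apply, smul_eq_mul,
        Matrix.mul_add, Matrix.trace_add, Matrix.mul_smul, Matrix.trace_smul]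
  have hQconv : Convex ℝ Q := by
    rintro y1 ⟨hy10, hy1s⟩ y2 ⟨hy20, hy2s⟩ α β hα hβ hαβ
    constructor
    · have : α * y1 0 + β * y2 0 ≤ 0 :=
        add_nonpos (mul_nonpos_of_nonneg_of_nonpos hα hy10)
          (mul_nonpos_of_nonneg_of_nonpos hβ hy20)
      simpa using this
    · intro i
      have : 0 ≤ α * y1 i.succ + β * y2 i.succ :=
        add_nonneg (mul_nonneg hα (hy1s i)) (mul_nonneg hβ (hy2s i))
      simpa using this
  have hQclosed : IsClosed Q := by
    have heq : Q = {y : Fin (L + 1) → ℝ | y 0 ≤ 0}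
        ∩ ⋂ i : Fin L, {y : Fin (L + 1) → ℝ | 0 ≤ y i.succ} := by
      ext y; simp [hQdef, Set.mem_iInter]
    rw [heq]
    exact (isClosed_le (continuous_apply 0) continuous_const).inter
      (isClosed_iInter fun i => isClosed_le continuous_const (continuous_apply _))
  have hdisj : Disjoint (φ '' K) Q := by
    rw [Set.disjoint_left]
    rintro y ⟨G, hGK, rfl⟩ ⟨hy0, hys⟩
    simp only [hφdef, Fin.cons_zero, Fin.cons_succ] at hy0 hys
    have hfeasG : PrimalFeasible M Finset.univ G := ⟨hGK.1, hGK.2, fun i _ => hys i⟩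
    linarith [hempty G hfeasG]
  obtain ⟨f, u, v, hfs, huv, hQv⟩ :=
    geometric_hahn_banach_compact_closed hsconv hscompact hQconv hQclosed hdisj
  have hv0 : v < 0 := by
    have h0Q : (0 : Fin (L + 1) → ℝ) ∈ Q := ⟨le_refl 0, fun i => le_refl 0⟩
    have := hQv 0 h0Q
    simpa using this
  have hu0 : u < 0 := huv.trans hv0
  set a : Fin (L + 1) → ℝ := fun k => f (Pi.single k 1) with hadef
  have hf_eq : ∀ y : Fin (L + 1) → ℝ, f y = ∑ k, y k * a k := by
    intro y
    have hy : y = ∑ k, y k • (Pi.single k 1 : Fin (L + 1) → ℝ) := by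
      funext j
      simp [Finset.sum_apply, Pi.single_apply]
    conv_lhs => rw [hy]
    rw [map_sum]
    exact Finset.sum_congr rfl fun k _ => by rw [f.map_smul, smul_eq_mul]
  -- sign conditions
  have ha0 : a 0 ≤ 0 := by
    by_contra h
    push_neg at h
    have ht : (0 : ℝ) ≤ (1 + |v|) / a 0 := div_nonneg (by positivity) h.le
    have hq : ((-((1 + |v|) / a 0)) • (Pi.single (0 : Fin (L + 1)) 1 : Fin (L + 1) → ℝ)) ∈ Q := by
      constructor
      · simp only [Pi.smul_apply, Pi.single_eq_same, smul_eq_mul, mul_one]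
        linarith
      · intro i
        simp [Pi.single_eq_of_ne (Fin.succ_ne_zero i)]
    have hlt := hQv _ hq
    rw [f.map_smul, smul_eq_mul] at hlt
    have : f (Pi.single (0 : Fin (L + 1)) 1) = a 0 := rfl
    rw [this, neg_mul, div_mul_cancel₀ _ (ne_of_gt h)] at hlt
    have := neg_abs_le v
    linarith
  have hasucc : ∀ i : Fin L, 0 ≤ a i.succ := by
    intro i
    by_contra h
    push_neg at h
    have ht : (0 : ℝ) ≤ (1 + |v|) / (-(a i.succ)) := div_nonneg (by positivity) (by linarith)
    have hq : (((1 + |v|) / (-(a i.succ))) • (Pi.single (i.succ : Fin (L + 1)) 1 : Fin (L + 1) → ℝ)) ∈ Q := by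
      constructor
      · simp [Pi.single_eq_of_ne (Fin.succ_ne_zero i).symm]
      · intro j
        by_cases hj : j = i
        · subst hj
          simp only [Pi.smul_apply, Pi.single_eq_same, smul_eq_mul, mul_one]
          exact ht
        · have hne : (j.succ : Fin (L + 1)) ≠ i.succ := fun hh => hj (Fin.succ_injective _ hh)
          simp [Pi.single_eq_of_ne hne]
    have hlt := hQv _ hq
    rw [f.map_smul, smul_eq_mul] at hlt
    have hfa : f (Pi.single (i.succ : Fin (L + 1)) 1) = a i.succ := rfl
    have heq2 : (1 + |v|) / (-(a i.succ)) * a i.succ = -(1 + |v|) := by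
      rw [div_mul_eq_mul_div, div_eq_iff (by linarith : -(a i.succ) ≠ 0)]
      ring
    rw [hfa, heq2] at hlt
    have := neg_abs_le v
    linarith
  -- key inequality on K
  have key : ∀ G : Matrix (Fin ℓ) (Fin ℓ) ℝ, G ∈ K →
      a 0 * ((M₀ * G).trace - c) + ∑ i : Fin L, (M i * G).trace * a i.succ < u := by
    intro G hGK
    have := hfs (φ G) (Set.mem_image_of_mem φ hGK)
    rw [hf_eq] at this
    rw [Fin.sum_univ_succ] at this
    simp only [hφdef, Fin.cons_zero, Fin.cons_succ] at this
    calc a 0 * ((M₀ * G).trace - c) + ∑ i : Fin L, (M i * G).trace * a i.succ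
        = ((M₀ * G).trace - c) * a 0 + ∑ i : Fin L, (M i * G).trace * a i.succ := by ring
      _ < u := this
  -- a 0 is strictly negative
  have ha0ne : a 0 < 0 := by
    rcases lt_or_eq_of_le ha0 with h | h
    · exact h
    · exfalso
      obtain ⟨Gf, hGf⟩ := hfeas
      have hGfK : Gf ∈ K := ⟨hGf.1, hGf.2.1⟩
      have hk := key Gf hGfK
      rw [h, zero_mul, zero_add] at hk
      have hsumnn : 0 ≤ ∑ i : Fin L, (M i * Gf).trace * a i.succ :=
        Finset.sum_nonneg fun i _ =>
          mul_nonneg (hGf.2.2 i (Finset.mem_univ i)) (hasucc i)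
      nlinarith
  set lam' : Fin L → ℝ := fun i => a i.succ / (-(a 0)) with hlamdef
  set δ : ℝ := u / a 0 with hδdef
  have hδpos : 0 < δ := div_pos_of_neg_of_neg hu0 ha0ne
  have hlamnn : ∀ i, 0 ≤ lam' i := fun i =>
    div_nonneg (hasucc i) (by linarith)
  have key2 : ∀ G : Matrix (Fin ℓ) (Fin ℓ) ℝ, G.PosSemidef → G.trace = 1 →
      c + δ < (M₀ * G).trace - ∑ i : Fin L, lam' i * (M i * G).trace := by
    intro G hp ht
    have h := key G ⟨hp, ht⟩
    have hterm : ∀ i : Fin L, (M i * G).trace * a i.succ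
        = -(a 0) * (lam' i * (M i * G).trace) := by
      intro i
      have hne : -(a 0) ≠ 0 := by linarith
      have hcan : lam' i * -(a 0) = a i.succ := by
        simp only [hlamdef]
        exact div_mul_cancel₀ _ hne
      rw [← hcan]
      ring
    rw [Finset.sum_congr rfl fun i _ => hterm i, ← Finset.mul_sum] at h
    have hu : u = δ * a 0 := by
      rw [hδdef, div_mul_cancel₀ _ (ne_of_lt ha0ne)]
    rw [hu] at h
    set S := ∑ i : Fin L, lam' i * (M i * G).trace
    set T := (M₀ * G).trace
    have h2 : a 0 * (T - c - S - δ) < 0 := by nlinarith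
    rcases mul_neg_iff.mp h2 with ⟨hpos, _⟩ | ⟨_, hpos⟩
    · linarith
    · linarith
  refine ⟨c + δ, lam', ⟨fun i _ => hlamnn i, ?_⟩, by linarith⟩
  have hBherm : (M₀ - (∑ i : Fin L, lam' i • M i)
      - (c + δ) • (1 : Matrix (Fin ℓ) (Fin ℓ) ℝ)).IsHermitian := by
    have h0 : M₀ᴴ = M₀ := isHermitian_of_isSymm hM₀
    have hs : (∑ i : Fin L, lam' i • M i)ᴴ = ∑ i : Fin L, lam' i • M i := by
      rw [Matrix.conjTranspose_sum]
      exact Finset.sum_congr rfl fun i _ => by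
        rw [Matrix.conjTranspose_smul, star_trivial, isHermitian_of_isSymm (hM i)]
    unfold Matrix.IsHermitian
    rw [Matrix.conjTranspose_sub, Matrix.conjTranspose_sub, Matrix.conjTranspose_smul,
      Matrix.conjTranspose_one, star_trivial, h0, hs]
  refine Matrix.PosSemidef.of_dotProduct_mulVec_nonneg hBherm fun x => ?_
  rw [star_trivial]
  by_cases hx : x = 0
  · subst hx
    simp
  · have hn2 : 0 < x ⬝ᵥ x := by
      obtain ⟨i, hi⟩ := Function.ne_iff.mp hx
      exact Finset.sum_pos' (fun j _ => mul_self_nonneg (x j))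
        ⟨i, Finset.mem_univ i, mul_self_pos.mpr hi⟩
    set G := (x ⬝ᵥ x)⁻¹ • Matrix.vecMulVec x x with hGdef
    have hGpsd : G.PosSemidef := psd_smul (inv_nonneg.mpr hn2.le) (psd_vecMulVec x)
    have hGtr : G.trace = 1 := by
      rw [hGdef, Matrix.trace_smul, smul_eq_mul, trace_vecMulVec',
        inv_mul_cancel₀ (ne_of_gt hn2)]
    have hTr : ∀ N : Matrix (Fin ℓ) (Fin ℓ) ℝ, (N * G).trace = (x ⬝ᵥ x)⁻¹ * (x ⬝ᵥ N *ᵥ x) := by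
      intro N
      rw [hGdef, Matrix.mul_smul, Matrix.trace_smul, smul_eq_mul, trace_mul_vecMulVec]
    have hkey := key2 G hGpsd hGtr
    rw [hTr] at hkey
    have hsum' : ∑ i : Fin L, lam' i * (M i * G).trace
        = (x ⬝ᵥ x)⁻¹ * ∑ i : Fin L, lam' i * (x ⬝ᵥ M i *ᵥ x) := by
      rw [Finset.mul_sum]
      exact Finset.sum_congr rfl fun i _ => by rw [hTr]; ring
    rw [hsum'] at hkey
    have h6 : (c + δ) * (x ⬝ᵥ x) < x ⬝ᵥ M₀ *ᵥ x - ∑ i : Fin L, lam' i * (x ⬝ᵥ M i *ᵥ x) := by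
      have h7 : c + δ < (x ⬝ᵥ x)⁻¹
          * (x ⬝ᵥ M₀ *ᵥ x - ∑ i : Fin L, lam' i * (x ⬝ᵥ M i *ᵥ x)) := by
        rw [mul_sub]
        linarith
      have h8 := mul_lt_mul_of_pos_right h7 hn2
      rwa [mul_comm ((x ⬝ᵥ x)⁻¹) _, mul_assoc, inv_mul_cancel₀ (ne_of_gt hn2), mul_one] at h8
    have hexp : x ⬝ᵥ ((M₀ - (∑ i : Fin L, lam' i • M i)
        - (c + δ) • (1 : Matrix (Fin ℓ) (Fin ℓ) ℝ)) *ᵥ x)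
        = x ⬝ᵥ M₀ *ᵥ x - (∑ i : Fin L, lam' i * (x ⬝ᵥ M i *ᵥ x)) - (c + δ) * (x ⬝ᵥ x) := by
      rw [Matrix.sub_mulVec, Matrix.sub_mulVec, dotProduct_sub, dotProduct_sub,
        dot_sum_mulVec, Matrix.smul_mulVec, Matrix.one_mulVec, dotProduct_smul,
        smul_eq_mul]
    rw [hexp]
    linarith

theorem modified_primal_solution_solves_primal
    {ℓ L : ℕ}
    (M₀ : Matrix (Fin ℓ) (Fin ℓ) ℝ) (M : Fin L → Matrix (Fin ℓ) (Fin ℓ) ℝ)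
    (hM₀ : M₀.IsSymm) (hM : ∀ i, (M i).IsSymm)
    (hfeas : ∃ G, PrimalFeasible M Finset.univ G)
    (ν : ℝ) (lam : Fin L → ℝ)
    (hdual : DualOptimal M₀ M Finset.univ ν lam)
    (J : Finset (Fin L)) (hJ : J = Finset.univ.filter (fun i => 0 < lam i))
    (G : Matrix (Fin ℓ) (Fin ℓ) ℝ)
    (hGopt : PrimalOptimal M₀ M J G)
    (huniq : ∀ G', PrimalOptimal M₀ M J G' → G' = G) :
    PrimalOptimal M₀ M Finset.univ G := by
  obtain ⟨⟨hlamnn, hpsd⟩, hmax⟩ := hdual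
  have hlam0 : ∀ i, i ∉ J → lam i = 0 := by
    intro i hi
    have h1 := hlamnn i (Finset.mem_univ i)
    by_contra h
    exact hi (hJ ▸ Finset.mem_filter.mpr
      ⟨Finset.mem_univ i, lt_of_le_of_ne h1 (Ne.symm h)⟩)
  have hsum : (∑ i ∈ J, lam i • M i) = ∑ i : Fin L, lam i • M i := by
    refine Finset.sum_subset (Finset.subset_univ J) ?_
    intro x _ hx
    rw [hlam0 x hx, zero_smul]
  have hdJ : DualFeasible M₀ M J ν lam := by
    refine ⟨fun i _ => hlamnn i (Finset.mem_univ i), ?_⟩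
    rw [hsum]
    exact hpsd
  by_cases hcase : ∃ G₀, PrimalFeasible M Finset.univ G₀ ∧ (M₀ * G₀).trace ≤ ν
  · obtain ⟨G₀, hG₀f, hG₀v⟩ := hcase
    have hG₀J : PrimalFeasible M J G₀ :=
      ⟨hG₀f.1, hG₀f.2.1, fun i _ => hG₀f.2.2 i (Finset.mem_univ i)⟩
    have hopt : PrimalOptimal M₀ M J G₀ :=
      ⟨hG₀J, fun G' hG' => le_trans hG₀v (weak_duality hdJ hG')⟩
    have hEq := huniq G₀ hopt
    subst hEq
    exact ⟨hG₀f, fun G' hG' =>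
      hopt.2 G' ⟨hG'.1, hG'.2.1, fun i _ => hG'.2.2 i (Finset.mem_univ i)⟩⟩
  · exfalso
    push_neg at hcase
    obtain ⟨ν', lam', hdf, hlt⟩ := farkas M₀ M hM₀ hM hfeas ν hcase
    exact absurd (hmax ν' lam' hdf) (not_le.mpr hlt)
end

section
/- Let H be a real R×R matrix. Then H is doubly hyperdominant with zero excess if and only if there exist finitely many nonnegative scalars λ_1, …, λ_k and R×R permutation matrices P_1, …, P_k such that H = Σ_{i=1}^k λ_i (I_R − P_i). -/
open Matrix

/-- A real square matrix is doubly hyperdominant if its off-diagonal entries are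
nonpositive and all row and column sums are nonnegative. -/
def IsDoublyHyperdominant {R : ℕ} (H : Matrix (Fin R) (Fin R) ℝ) : Prop :=
  (∀ i j, i ≠ j → H i j ≤ 0) ∧ (∀ i, 0 ≤ ∑ j, H i j) ∧ (∀ j, 0 ≤ ∑ i, H i j)

/-- Doubly hyperdominant with zero excess: in addition all row and column sums vanish. -/
def IsDoublyHyperdominantZeroExcess {R : ℕ} (H : Matrix (Fin R) (Fin R) ℝ) : Prop :=
  IsDoublyHyperdominant H ∧ (∀ i, ∑ j, H i j = 0) ∧ (∀ j, ∑ i, H i j = 0)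

/-- A permutation matrix: a square 0–1 matrix with exactly one 1 in each row and column. -/
def IsPermutationMatrix {R : ℕ} (P : Matrix (Fin R) (Fin R) ℝ) : Prop :=
  (∀ i j, P i j = 0 ∨ P i j = 1) ∧ (∀ i, ∑ j, P i j = 1) ∧ (∀ j, ∑ i, P i j = 1)

lemma permMatrix_entry {R : ℕ} (σ : Equiv.Perm (Fin R)) (i j : Fin R) :
    σ.permMatrix ℝ i j = if σ i = j then 1 else 0 := by
  simp [Equiv.Perm.permMatrix, PEquiv.toMatrix_apply, Equiv.toPEquiv_apply]

lemma permMatrix_isPerm {R : ℕ} (σ : Equiv.Perm (Fin R)) :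
    IsPermutationMatrix (σ.permMatrix ℝ) := by
  refine ⟨fun i j => ?_, fun i => ?_, fun j => ?_⟩
  · rw [permMatrix_entry]; split <;> simp
  · simp only [permMatrix_entry]
    rw [Finset.sum_ite_eq]
    simp
  · have h2 : ∀ i : Fin R, (if σ i = j then (1:ℝ) else 0) = if i = σ.symm j then 1 else 0 := by
      intro i
      rcases eq_or_ne i (σ.symm j) with h | h
      · subst h; simp
      · rw [if_neg h, if_neg fun hh => h ((Equiv.eq_symm_apply σ).mpr hh)]
    simp only [permMatrix_entry, h2]
    rw [Finset.sum_ite_eq']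
    simp

theorem doublyHyperdominantZeroExcess_iff_conic_combination
    {R : ℕ} (H : Matrix (Fin R) (Fin R) ℝ) :
    IsDoublyHyperdominantZeroExcess H ↔
      ∃ (k : ℕ) (lam : Fin k → ℝ) (P : Fin k → Matrix (Fin R) (Fin R) ℝ),
        (∀ i, 0 ≤ lam i) ∧ (∀ i, IsPermutationMatrix (P i)) ∧
        H = ∑ i, lam i • ((1 : Matrix (Fin R) (Fin R) ℝ) - P i) := by
  constructor
  · rintro ⟨⟨hoff, -, -⟩, hrow, hcol⟩
    -- diagonal entries are nonnegative
    have hdiag : ∀ i, 0 ≤ H i i := by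
      intro i
      have h1 : H i i = -∑ j ∈ Finset.univ.erase i, H i j := by
        have := hrow i
        rw [← Finset.add_sum_erase _ _ (Finset.mem_univ i)] at this
        linarith
      rw [h1]
      have : ∑ j ∈ Finset.univ.erase i, H i j ≤ 0 :=
        Finset.sum_nonpos fun j hj => hoff i j (Ne.symm (Finset.ne_of_mem_erase hj))
      linarith
    set c : ℝ := ∑ i, H i i with hc
    have hc0 : 0 ≤ c := Finset.sum_nonneg fun i _ => hdiag i
    have hle : ∀ i, H i i ≤ c := by
      intro i
      rw [hc]
      exact Finset.single_le_sum (fun j _ => hdiag j) (Finset.mem_univ i)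
    set A : Matrix (Fin R) (Fin R) ℝ := c • (1 : Matrix (Fin R) (Fin R) ℝ) - H with hA
    have hA' : ∃ M' ∈ doublyStochastic ℝ (Fin R), A = c • M' := by
      rw [exists_mem_doublyStochastic_eq_smul_iff hc0]
      refine ⟨fun i j => ?_, fun i => ?_, fun j => ?_⟩
      · by_cases h : i = j
        · subst h
          simp only [hA, Matrix.sub_apply, Matrix.smul_apply, one_apply_eq, smul_eq_mul, mul_one]
          linarith [hle i]
        · simp only [hA, Matrix.sub_apply, Matrix.smul_apply, one_apply_ne h, smul_eq_mul, mul_zero]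
          linarith [hoff i j h]
      · simp [hA, Finset.sum_sub_distrib, hrow i, Matrix.one_apply]
      · simp [hA, Finset.sum_sub_distrib, hcol j, Matrix.one_apply]
    obtain ⟨M', hM', hAM⟩ := hA'
    obtain ⟨w, hw0, hw1, hwsum⟩ := exists_eq_sum_perm_of_mem_doublyStochastic hM'
    -- index permutations by Fin k
    set k := Fintype.card (Equiv.Perm (Fin R)) with hk
    let e : Equiv.Perm (Fin R) ≃ Fin k := Fintype.equivFin _
    refine ⟨k, fun m => c * w (e.symm m), fun m => (e.symm m).permMatrix ℝ,
      fun m => mul_nonneg hc0 (hw0 _), fun m => permMatrix_isPerm _, ?_⟩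
    have hsum : ∑ m : Fin k, (c * w (e.symm m)) •
        ((1 : Matrix (Fin R) (Fin R) ℝ) - (e.symm m).permMatrix ℝ)
        = ∑ σ : Equiv.Perm (Fin R), (c * w σ) •
          ((1 : Matrix (Fin R) (Fin R) ℝ) - σ.permMatrix ℝ) :=
      Fintype.sum_equiv e.symm _ _ (fun m => rfl)
    rw [hsum]
    have expand : ∑ σ : Equiv.Perm (Fin R), (c * w σ) •
        ((1 : Matrix (Fin R) (Fin R) ℝ) - σ.permMatrix ℝ)
        = (∑ σ : Equiv.Perm (Fin R), (c * w σ)) • (1 : Matrix (Fin R) (Fin R) ℝ)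
          - c • ∑ σ : Equiv.Perm (Fin R), w σ • σ.permMatrix ℝ := by
      simp only [smul_sub, Finset.sum_sub_distrib, Finset.sum_smul, Finset.smul_sum, mul_smul]
    rw [expand, ← Finset.mul_sum, hw1, mul_one, hwsum, ← hAM, hA]
    abel
  · rintro ⟨k, lam, P, hlam, hP, rfl⟩
    have entry : ∀ i j, (∑ m, lam m • ((1 : Matrix (Fin R) (Fin R) ℝ) - P m)) i j
        = ∑ m, lam m * ((1 : Matrix (Fin R) (Fin R) ℝ) i j - P m i j) := by
      intro i j
      rw [Matrix.sum_apply]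
      simp
    have Pnn : ∀ m i j, 0 ≤ P m i j := by
      intro m i j
      rcases (hP m).1 i j with h | h <;> simp [h]
    have hrowsum : ∀ i, ∑ j, (∑ m, lam m • ((1 : Matrix (Fin R) (Fin R) ℝ) - P m)) i j = 0 := by
      intro i
      simp only [entry]
      rw [Finset.sum_comm]
      refine Finset.sum_eq_zero fun m _ => ?_
      rw [← Finset.mul_sum, Finset.sum_sub_distrib]
      have h1 : ∑ x : Fin R, (1 : Matrix (Fin R) (Fin R) ℝ) i x = 1 := by
        simp [Matrix.one_apply]
      rw [h1, (hP m).2.1 i]; ring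
    have hcolsum : ∀ j, ∑ i, (∑ m, lam m • ((1 : Matrix (Fin R) (Fin R) ℝ) - P m)) i j = 0 := by
      intro j
      simp only [entry]
      rw [Finset.sum_comm]
      refine Finset.sum_eq_zero fun m _ => ?_
      rw [← Finset.mul_sum, Finset.sum_sub_distrib]
      have h1 : ∑ x : Fin R, (1 : Matrix (Fin R) (Fin R) ℝ) x j = 1 := by
        simp [Matrix.one_apply]
      rw [h1, (hP m).2.2 j]; ring
    refine ⟨⟨fun i j hij => ?_, fun i => le_of_eq (hrowsum i).symm,
      fun j => le_of_eq (hcolsum j).symm⟩, hrowsum, hcolsum⟩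
    rw [entry]
    refine Finset.sum_nonpos fun m _ => ?_
    rw [Matrix.one_apply_ne hij]
    have := Pnn m i j
    nlinarith [hlam m]
end

section
/- (Lyapunov form of the asymptotic bound.) Let q, p, d ≥ 1, let Â ∈ ℝ^{q×q}, B̂ ∈ ℝ^{q×1}, Ĉ ∈ ℝ^{p×q}, D̂ ∈ ℝ^{p×1}, let P be a real symmetric positive definite q×q matrix, let ρ ≥ 0, and let K be a real symmetric p×p matrix. Suppose the matrix [ρ²P, 0; 0, 0] − [Â, B̂]ᵀ P [Â, B̂] − [Ĉ, D̂]ᵀ K [Ĉ, D̂] (a symmetric (q+1)×(q+1) matrix) is positive semidefinite. Let η_k ∈ ℝ^{qd} and u_k ∈ ℝ^d be sequences satisfying η_{k+1} = (Â ⊗ I_d) η_k + (B̂ ⊗ I_d) u_k and, for every k, (η_kᵀ, u_kᵀ) ([Ĉ, D̂]ᵀ K [Ĉ, D̂] ⊗ I_d) (η_kᵀ, u_kᵀ)ᵀ ≥ 0. Then η_kᵀ (P ⊗ I_d) η_k ≤ ρ^{2k} η_0ᵀ (P ⊗ I_d) η_0 for every k ≥ 0, and consequently ‖η_k‖ ≤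 √(λ_max(P)/λ_min(P)) · ρ^k · ‖η_0‖ for every k ≥ 0, where λ_max(P) and λ_min(P) denote the largest and smallest eigenvalues of P. -/
open Matrix Kronecker

lemma kron_mulVec_col {m n : Type*} [Fintype m] [Fintype n] {d : ℕ}
    (M : Matrix m n ℝ) (x : n × Fin d → ℝ) (i : m) (j : Fin d) :
    ((M ⊗ₖ (1 : Matrix (Fin d) (Fin d) ℝ)) *ᵥ x) (i, j)
      = (M *ᵥ fun i' => x (i', j)) i := by
  simp [mulVec, dotProduct, Fintype.sum_prod_type, kroneckerMap_apply, Matrix.one_apply,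
    mul_ite, mul_zero, mul_one]

lemma quad_kron {n : Type*} [Fintype n] {d : ℕ}
    (M : Matrix n n ℝ) (x : n × Fin d → ℝ) :
    x ⬝ᵥ ((M ⊗ₖ (1 : Matrix (Fin d) (Fin d) ℝ)) *ᵥ x)
      = ∑ j : Fin d, (fun i => x (i, j)) ⬝ᵥ (M *ᵥ fun i => x (i, j)) := by
  rw [dotProduct, Fintype.sum_prod_type, Finset.sum_comm]
  refine Finset.sum_congr rfl fun j _ => ?_
  rw [dotProduct]
  refine Finset.sum_congr rfl fun i _ => ?_
  rw [kron_mulVec_col]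

lemma quad_eigen_repr {n : Type*} [Fintype n] [DecidableEq n]
    {A : Matrix n n ℝ} (hA : A.IsHermitian) (x : n → ℝ) :
    ∃ y : n → ℝ, x ⬝ᵥ (A *ᵥ x) = ∑ i, hA.eigenvalues i * (y i)^2
      ∧ x ⬝ᵥ x = ∑ i, (y i)^2 := by
  set U : Matrix n n ℝ := (hA.eigenvectorUnitary : Matrix n n ℝ) with hU
  have hstar : star U = Uᵀ := by
    ext i j; simp [conjTranspose_apply]
  have hUU : U * star U = 1 := (Matrix.mem_unitaryGroup_iff).mp hA.eigenvectorUnitary.2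
  refine ⟨Uᵀ *ᵥ x, ?_, ?_⟩
  · conv_lhs => rw [hA.spectral_theorem]
    have hdiag : diagonal (RCLike.ofReal ∘ hA.eigenvalues) = diagonal hA.eigenvalues := by
      rfl
    rw [Unitary.conjStarAlgAut_apply, ← hU, hdiag, hstar]
    rw [← mulVec_mulVec, ← mulVec_mulVec, dotProduct_mulVec, ← mulVec_transpose]
    simp [mulVec_diagonal, dotProduct, mul_comm, pow_two, mul_assoc, mul_left_comm]
  · have h1 : (Uᵀ *ᵥ x) ⬝ᵥ (Uᵀ *ᵥ x) = x ⬝ᵥ x := by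
      nth_rewrite 1 [mulVec_transpose]
      rw [← dotProduct_mulVec, mulVec_mulVec, ← hstar, hUU, one_mulVec]
    rw [← h1]
    simp [dotProduct, pow_two]

lemma quad_lower {n : Type*} [Fintype n] [DecidableEq n]
    {A : Matrix n n ℝ} (hA : A.IsHermitian) (x : n → ℝ) {c : ℝ}
    (hc : ∀ i, c ≤ hA.eigenvalues i) :
    c * (x ⬝ᵥ x) ≤ x ⬝ᵥ (A *ᵥ x) := by
  obtain ⟨y, h1, h2⟩ := quad_eigen_repr hA x
  rw [h1, h2, Finset.mul_sum]
  exact Finset.sum_le_sum fun i _ =>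
    mul_le_mul_of_nonneg_right (hc i) (sq_nonneg _)

lemma quad_upper {n : Type*} [Fintype n] [DecidableEq n]
    {A : Matrix n n ℝ} (hA : A.IsHermitian) (x : n → ℝ) {c : ℝ}
    (hc : ∀ i, hA.eigenvalues i ≤ c) :
    x ⬝ᵥ (A *ᵥ x) ≤ c * (x ⬝ᵥ x) := by
  obtain ⟨y, h1, h2⟩ := quad_eigen_repr hA x
  rw [h1, h2, Finset.mul_sum]
  exact Finset.sum_le_sum fun i _ =>
    mul_le_mul_of_nonneg_right (hc i) (sq_nonneg _)

lemma quad_conj {m n : Type*} [Fintype m] [Fintype n]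
    (F : Matrix m n ℝ) (M : Matrix m m ℝ) (w : n → ℝ) :
    w ⬝ᵥ ((Fᵀ * M * F) *ᵥ w) = (F *ᵥ w) ⬝ᵥ (M *ᵥ (F *ᵥ w)) := by
  rw [← mulVec_mulVec, ← mulVec_mulVec, dotProduct_mulVec, vecMul_transpose]

lemma quad_fromBlocks {a b : Type*} [Fintype a] [Fintype b] [DecidableEq a] [DecidableEq b]
    (M : Matrix a a ℝ) (y : a → ℝ) (v : b → ℝ) :
    Sum.elim y v ⬝ᵥ ((fromBlocks M 0 0 0 : Matrix (a ⊕ b) (a ⊕ b) ℝ) *ᵥ Sum.elim y v)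
      = y ⬝ᵥ (M *ᵥ y) := by
  rw [fromBlocks_mulVec]
  simp [sumElim_dotProduct_sumElim]

/-- Lyapunov form of the asymptotic performance bound. -/
theorem lyapunov_asymptotic_bound
    {q p d : ℕ} (hq : 1 ≤ q) (hp : 1 ≤ p) (hd : 1 ≤ d)
    (Ahat : Matrix (Fin q) (Fin q) ℝ) (Bhat : Matrix (Fin q) (Fin 1) ℝ)
    (Chat : Matrix (Fin p) (Fin q) ℝ) (Dhat : Matrix (Fin p) (Fin 1) ℝ)
    (P : Matrix (Fin q) (Fin q) ℝ) (hP : P.PosDef)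
    (ρ : ℝ) (hρ : 0 ≤ ρ)
    (K : Matrix (Fin p) (Fin p) ℝ) (hK : K.IsSymm)
    (hLMI : (fromBlocks (ρ ^ 2 • P) 0 0 0
        - (fromCols Ahat Bhat)ᵀ * P * fromCols Ahat Bhat
        - (fromCols Chat Dhat)ᵀ * K * fromCols Chat Dhat).PosSemidef)
    (η : ℕ → EuclideanSpace ℝ (Fin q × Fin d))
    (u : ℕ → EuclideanSpace ℝ (Fin d))
    (hdyn : ∀ (k : ℕ) (pp : Fin q × Fin d),
      η (k + 1) pp = ((Ahat ⊗ₖ (1 : Matrix (Fin d) (Fin d) ℝ)).mulVec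
          (fun z => η k z)) pp
        + ((Bhat ⊗ₖ (1 : Matrix (Fin d) (Fin d) ℝ)).mulVec
          (fun z : Fin 1 × Fin d => u k z.2)) pp)
    (ζ : ℕ → (Fin q ⊕ Fin 1) × Fin d → ℝ)
    (hζ : ∀ (k : ℕ) (z : (Fin q ⊕ Fin 1) × Fin d),
      ζ k z = Sum.elim (fun i => η k (i, z.2)) (fun _ => u k z.2) z.1)
    (hineq : ∀ k : ℕ,
      0 ≤ ζ k ⬝ᵥ ((((fromCols Chat Dhat)ᵀ * K * fromCols Chat Dhat) ⊗ₖ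
          (1 : Matrix (Fin d) (Fin d) ℝ)).mulVec (ζ k))) :
    (∀ k : ℕ,
      (fun z => η k z) ⬝ᵥ ((P ⊗ₖ (1 : Matrix (Fin d) (Fin d) ℝ)).mulVec (fun z => η k z))
        ≤ ρ ^ (2 * k) *
          ((fun z => η 0 z) ⬝ᵥ ((P ⊗ₖ (1 : Matrix (Fin d) (Fin d) ℝ)).mulVec
            (fun z => η 0 z)))) ∧
    ∀ k : ℕ, ‖η k‖ ≤
      Real.sqrt ((⨆ i, hP.1.eigenvalues i) / (⨅ i, hP.1.eigenvalues i)) * ρ ^ k * ‖η 0‖ := by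
  have hne : Nonempty (Fin q) := ⟨⟨0, hq⟩⟩
  set F : Matrix (Fin q) (Fin q ⊕ Fin 1) ℝ := fromCols Ahat Bhat with hF
  set G : Matrix (Fin p) (Fin q ⊕ Fin 1) ℝ := fromCols Chat Dhat with hG
  set V : ℕ → ℝ := fun k =>
    (fun z => η k z) ⬝ᵥ ((P ⊗ₖ (1 : Matrix (Fin d) (Fin d) ℝ)).mulVec (fun z => η k z)) with hV
  have hVsum : ∀ k, V k = ∑ j : Fin d,
      (fun i => η k (i, j)) ⬝ᵥ (P *ᵥ fun i => η k (i, j)) :=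
    fun k => quad_kron P (fun z => η k z)
  -- one-step decrease
  have step : ∀ k, V (k + 1) ≤ ρ ^ 2 * V k := by
    intro k
    set w : Fin d → (Fin q ⊕ Fin 1) → ℝ :=
      fun j => Sum.elim (fun i => η k (i, j)) (fun _ => u k j) with hw
    have hζcol : ∀ j, (fun c => ζ k (c, j)) = w j :=
      fun j => funext fun c => hζ k (c, j)
    have hnext : ∀ j, (fun i => η (k + 1) (i, j)) = F *ᵥ w j := by
      intro j; funext i
      rw [hdyn k (i, j)]
      show ((Ahat ⊗ₖ (1 : Matrix (Fin d) (Fin d) ℝ)) *ᵥ (fun z => η k z)) (i, j)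
          + ((Bhat ⊗ₖ (1 : Matrix (Fin d) (Fin d) ℝ)) *ᵥ (fun z : Fin 1 × Fin d => u k z.2)) (i, j)
          = (F *ᵥ w j) i
      rw [kron_mulVec_col, kron_mulVec_col, hw, hF, fromCols_mulVec_sumElim]
      rfl
    have hkey : ∀ j, (w j) ⬝ᵥ ((Fᵀ * P * F) *ᵥ w j) + (w j) ⬝ᵥ ((Gᵀ * K * G) *ᵥ w j)
        ≤ ρ ^ 2 * ((fun i => η k (i, j)) ⬝ᵥ (P *ᵥ fun i => η k (i, j))) := by
      intro j
      have h0 := hLMI.dotProduct_mulVec_nonneg (w j)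
      rw [star_trivial, sub_mulVec, sub_mulVec, dotProduct_sub, dotProduct_sub] at h0
      have hB : (w j) ⬝ᵥ ((fromBlocks (ρ ^ 2 • P) 0 0 0 :
            Matrix (Fin q ⊕ Fin 1) (Fin q ⊕ Fin 1) ℝ) *ᵥ w j)
          = ρ ^ 2 * ((fun i => η k (i, j)) ⬝ᵥ (P *ᵥ fun i => η k (i, j))) := by
        rw [hw, quad_fromBlocks, smul_mulVec, dotProduct_smul, smul_eq_mul]
      linarith
    have hS2 : 0 ≤ ∑ j : Fin d, (w j) ⬝ᵥ ((Gᵀ * K * G) *ᵥ w j) := by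
      have h := hineq k
      rw [quad_kron] at h
      calc (0:ℝ) ≤ ∑ j : Fin d, (fun c => ζ k (c, j)) ⬝ᵥ ((Gᵀ * K * G) *ᵥ fun c => ζ k (c, j)) := h
        _ = ∑ j : Fin d, (w j) ⬝ᵥ ((Gᵀ * K * G) *ᵥ w j) := by
            refine Finset.sum_congr rfl fun j _ => ?_
            rw [hζcol]
    have hV1 : V (k + 1) = ∑ j : Fin d, (w j) ⬝ᵥ ((Fᵀ * P * F) *ᵥ w j) := by
      rw [hVsum (k + 1)]
      refine Finset.sum_congr rfl fun j _ => ?_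
      rw [quad_conj, ← hnext j]
    have hsum := Finset.sum_le_sum (fun j (_ : j ∈ Finset.univ) => hkey j)
    rw [Finset.sum_add_distrib] at hsum
    have hVk : ∑ j : Fin d, ρ ^ 2 * ((fun i => η k (i, j)) ⬝ᵥ (P *ᵥ fun i => η k (i, j)))
        = ρ ^ 2 * V k := by
      rw [hVsum k, Finset.mul_sum]
    rw [hVk] at hsum
    rw [hV1]
    linarith
  -- geometric decay
  have hρ2 : (0:ℝ) ≤ ρ ^ 2 := sq_nonneg ρ
  have mono : ∀ k, V k ≤ ρ ^ (2 * k) * V 0 := by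
    intro k
    induction k with
    | zero => simp
    | succ k ih =>
      calc V (k + 1) ≤ ρ ^ 2 * V k := step k
        _ ≤ ρ ^ 2 * (ρ ^ (2 * k) * V 0) := mul_le_mul_of_nonneg_left ih hρ2
        _ = ρ ^ (2 * (k + 1)) * V 0 := by ring
  refine ⟨mono, ?_⟩
  -- eigenvalue bounds
  set Ev : Fin q → ℝ := hP.1.eigenvalues with hEv
  have hbb : BddBelow (Set.range Ev) := (Set.finite_range Ev).bddBelow
  have hba : BddAbove (Set.range Ev) := (Set.finite_range Ev).bddAbove
  have hlam_pos : 0 < ⨅ i, Ev i := by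
    obtain ⟨i, hi⟩ := exists_eq_ciInf_of_finite (f := Ev)
    rw [← hi]
    exact hP.eigenvalues_pos i
  have hlamM_nonneg : 0 ≤ ⨆ i, Ev i :=
    le_trans (hP.eigenvalues_pos (Classical.arbitrary _)).le (le_ciSup hba _)
  have hxx : ∀ k, (fun z => η k z) ⬝ᵥ (fun z => η k z)
      = ∑ j : Fin d, (fun i => η k (i, j)) ⬝ᵥ (fun i => η k (i, j)) := by
    intro k
    rw [dotProduct, Fintype.sum_prod_type, Finset.sum_comm]
    exact Finset.sum_congr rfl fun j _ => rfl
  have hlow : ∀ k, (⨅ i, Ev i) * ((fun z => η k z) ⬝ᵥ (fun z => η k z)) ≤ V k := by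
    intro k
    rw [hVsum k, hxx k, Finset.mul_sum]
    exact Finset.sum_le_sum fun j _ => quad_lower hP.1 _ (fun i => ciInf_le hbb i)
  have hupp : ∀ k, V k ≤ (⨆ i, Ev i) * ((fun z => η k z) ⬝ᵥ (fun z => η k z)) := by
    intro k
    rw [hVsum k, hxx k, Finset.mul_sum]
    exact Finset.sum_le_sum fun j _ => quad_upper hP.1 _ (fun i => le_ciSup hba i)
  have hn : ∀ k, (fun z => η k z) ⬝ᵥ (fun z => η k z) = ‖η k‖ ^ 2 := by
    intro k
    rw [← real_inner_self_eq_norm_sq]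
    rw [EuclideanSpace.inner_eq_star_dotProduct]
    simp [dotProduct]
  intro k
  set R : ℝ := Real.sqrt ((⨆ i, Ev i) / (⨅ i, Ev i)) * ρ ^ k * ‖η 0‖ with hR
  have hRnn : 0 ≤ R :=
    mul_nonneg (mul_nonneg (Real.sqrt_nonneg _) (pow_nonneg hρ _)) (norm_nonneg _)
  have hchain : (⨅ i, Ev i) * ‖η k‖ ^ 2 ≤ ρ ^ (2 * k) * ((⨆ i, Ev i) * ‖η 0‖ ^ 2) := by
    have h1 := hlow k
    have h2 := mono k
    have h3 := hupp 0
    rw [hn k] at h1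
    rw [hn 0] at h3
    calc (⨅ i, Ev i) * ‖η k‖ ^ 2 ≤ V k := h1
      _ ≤ ρ ^ (2 * k) * V 0 := h2
      _ ≤ ρ ^ (2 * k) * ((⨆ i, Ev i) * ‖η 0‖ ^ 2) :=
          mul_le_mul_of_nonneg_left h3 (pow_nonneg hρ _)
  have hRsq : R ^ 2 = (⨆ i, Ev i) / (⨅ i, Ev i) * ρ ^ (2 * k) * ‖η 0‖ ^ 2 := by
    rw [hR, mul_pow, mul_pow, Real.sq_sqrt (div_nonneg hlamM_nonneg hlam_pos.le),
      ← pow_mul, Nat.mul_comm k 2]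
  have hsq : ‖η k‖ ^ 2 ≤ R ^ 2 := by
    rw [hRsq]
    rw [div_mul_eq_mul_div, div_mul_eq_mul_div, le_div_iff₀ hlam_pos]
    calc ‖η k‖ ^ 2 * (⨅ i, Ev i) = (⨅ i, Ev i) * ‖η k‖ ^ 2 := by ring
      _ ≤ ρ ^ (2 * k) * ((⨆ i, Ev i) * ‖η 0‖ ^ 2) := hchain
      _ = (⨆ i, Ev i) * ρ ^ (2 * k) * ‖η 0‖ ^ 2 := by ring
  calc ‖η k‖ = Real.sqrt (‖η k‖ ^ 2) := (Real.sqrt_sq (norm_nonneg _)).symm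
    _ ≤ Real.sqrt (R ^ 2) := Real.sqrt_le_sqrt hsq
    _ = R := Real.sqrt_sq hRnn
end
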